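/- arXiv:0906.1861 — 3 statements merged into one kernel-verified Lean document; each statement's English description precedes it below -/
import Mathlib

section
/- For all real numbers x, y with 0 < x, 0 < y and x + y < 1, Appell's second hypergeometric function satisfies F₂(2; 1, 1; 2, 2; x, y) = (ln(1−x) + ln(1−y) − ln(1−x−y)) / (x y). -/
/-- Pochhammer symbol `(x)_k = ∏_{i=0}^{k-1} (x + i)` for a real number `x`. -/
noncomputable def pochR (x : ℝ) (k : ℕ) : ℝ := ∏ i ∈ Finset.range k, (x + i)

/-- Appell's `F₂` double series (real version). -/
noncomputable def appellF2R (a b₁ b₂ c₁ c₂ x y : ℝ) : ℝ :=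
  ∑' p : ℕ × ℕ, pochR a (p.1 + p.2) * pochR b₁ p.1 * pochR b₂ p.2 /
    (pochR c₁ p.1 * pochR c₂ p.2 * (Nat.factorial p.1 : ℝ) * (Nat.factorial p.2 : ℝ)) *
    x ^ p.1 * y ^ p.2

lemma pochR_one (k : ℕ) : pochR 1 k = Nat.factorial k := by
  induction k with
  | zero => simp [pochR]
  | succ n ih =>
    rw [pochR, Finset.prod_range_succ, ← pochR, ih, Nat.factorial_succ]
    push_cast; ring

lemma pochR_two (k : ℕ) : pochR 2 k = Nat.factorial (k + 1) := by
  induction k with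
  | zero => simp [pochR]
  | succ n ih =>
    rw [pochR, Finset.prod_range_succ, ← pochR, ih, Nat.factorial_succ (n + 1)]
    push_cast; ring

/-- The general term of `F₂(2;1,1;2,2;x,y)` in closed binomial form. -/
lemma term_eq (x y : ℝ) (i j : ℕ) :
    pochR 2 (i + j) * pochR 1 i * pochR 1 j /
      (pochR 2 i * pochR 2 j * (Nat.factorial i : ℝ) * (Nat.factorial j : ℝ)) *
      x ^ i * y ^ j
    = ((j + 1 + i).choose i : ℝ) / (i + 1) * x ^ i * y ^ j := by
  have hC : ((i + j + 1).choose i) * Nat.factorial i * Nat.factorial (j + 1) =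
      Nat.factorial (i + j + 1) := by
    have h := Nat.choose_mul_factorial_mul_factorial (n := i + j + 1) (k := i) (by omega)
    rwa [show i + j + 1 - i = j + 1 by omega] at h
  have hCc : (((i + j + 1).choose i : ℝ)) * (Nat.factorial i : ℝ) *
      (Nat.factorial (j + 1) : ℝ) = (Nat.factorial (i + j + 1) : ℝ) := by
    exact_mod_cast congrArg (fun n : ℕ => (n : ℝ)) hC
  rw [pochR_one, pochR_one, pochR_two, pochR_two, pochR_two,
    show j + 1 + i = i + j + 1 by omega]
  have h5 : ((i : ℝ) + 1) ≠ 0 := by positivity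
  have hfi : (Nat.factorial (i + 1) : ℝ) = ((i : ℝ) + 1) * Nat.factorial i := by
    rw [Nat.factorial_succ]; push_cast; ring
  have hcoef : (Nat.factorial (i + j + 1) : ℝ) * Nat.factorial i * Nat.factorial j /
      ((Nat.factorial (i + 1) : ℝ) * Nat.factorial (j + 1) * Nat.factorial i *
        Nat.factorial j)
      = ((i + j + 1).choose i : ℝ) / (i + 1) := by
    rw [hfi, div_eq_div_iff (by positivity) h5]
    linear_combination (-((i : ℝ) + 1) * (Nat.factorial i : ℝ) * (Nat.factorial j : ℝ)) * hCc
  rw [hcoef]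

theorem stmt_3 (x y : ℝ) (hx : 0 < x) (hy : 0 < y) (hxy : x + y < 1) :
    appellF2R 2 1 1 2 2 x y =
      (Real.log (1 - x) + Real.log (1 - y)
        - Real.log (1 - x - y)) / (x * y) := by
  have hy1 : y < 1 := by linarith
  have h1y : (0:ℝ) < 1 - y := by linarith
  have h1x : (0:ℝ) < 1 - x := by linarith
  have h1xy : (0:ℝ) < 1 - x - y := by linarith
  have hynorm : ‖y‖ < 1 := by rw [Real.norm_eq_abs, abs_of_pos hy]; exact hy1
  -- inner sums
  have hinner : ∀ i : ℕ, HasSum (fun j : ℕ => ((j + 1 + i).choose i : ℝ) / (i + 1) * x ^ i * y ^ j)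
      ((1 / (1 - y) ^ (i + 1) - 1) * (x ^ i / (((i : ℝ) + 1) * y))) := by
    intro i
    have hbase : HasSum (fun n : ℕ => ((n + i).choose i : ℝ) * y ^ n)
        (1 / (1 - y) ^ (i + 1)) := hasSum_choose_mul_geometric_of_norm_lt_one i hynorm
    have hshift : HasSum (fun n : ℕ => ((n + 1 + i).choose i : ℝ) * y ^ (n + 1))
        (1 / (1 - y) ^ (i + 1) - 1) := by
      refine (hasSum_nat_add_iff (f := fun n : ℕ => ((n + i).choose i : ℝ) * y ^ n) 1).mpr ?_
      convert hbase using 1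
      · rfl
      simp
    have := hshift.mul_right (x ^ i / (((i : ℝ) + 1) * y))
    convert this using 2 with j
    · rfl
    · field_simp
      ring
  -- outer sum
  have hxr : |x / (1 - y)| < 1 := by
    rw [abs_of_pos (by positivity), div_lt_one h1y]; linarith
  have hxa : |x| < 1 := by rw [abs_of_pos hx]; linarith
  have h1 : HasSum (fun n : ℕ => (x / (1 - y)) ^ (n + 1) / (n + 1))
      (-Real.log (1 - x / (1 - y))) := Real.hasSum_pow_div_log_of_abs_lt_one hxr
  have h2 : HasSum (fun n : ℕ => x ^ (n + 1) / (n + 1)) (-Real.log (1 - x)) :=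
    Real.hasSum_pow_div_log_of_abs_lt_one hxa
  have hlog : Real.log (1 - x / (1 - y)) = Real.log (1 - x - y) - Real.log (1 - y) := by
    have : 1 - x / (1 - y) = (1 - x - y) / (1 - y) := by field_simp; ring
    rw [this, Real.log_div (by positivity) (by positivity)]
  have hx0 : x ≠ 0 := ne_of_gt hx
  have hy0 : y ≠ 0 := ne_of_gt hy
  have houter : HasSum (fun i : ℕ => (1 / (1 - y) ^ (i + 1) - 1) * (x ^ i / (((i : ℝ) + 1) * y)))
      ((Real.log (1 - x) + Real.log (1 - y) - Real.log (1 - x - y)) / (x * y)) := by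
    have h3 := (h1.sub h2).mul_left (1 / (x * y))
    have hval : 1 / (x * y) * (-Real.log (1 - x / (1 - y)) - -Real.log (1 - x)) =
        (Real.log (1 - x) + Real.log (1 - y) - Real.log (1 - x - y)) / (x * y) := by
      rw [hlog]; field_simp; ring
    rw [hval] at h3
    have hfun : (fun i : ℕ => (1 / (1 - y) ^ (i + 1) - 1) * (x ^ i / (((i : ℝ) + 1) * y))) =
        fun i : ℕ => 1 / (x * y) * ((x / (1 - y)) ^ (i + 1) / ((i : ℝ) + 1) -
          x ^ (i + 1) / ((i : ℝ) + 1)) := by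
      funext i
      rw [div_pow]
      have hp : ((1 - y) ^ (i + 1)) ≠ 0 := by positivity
      have hi1 : ((i : ℝ) + 1) ≠ 0 := by positivity
      field_simp
      ring
    rw [hfun]
    exact h3
  -- assemble
  have hterm : ∀ p : ℕ × ℕ, pochR 2 (p.1 + p.2) * pochR 1 p.1 * pochR 1 p.2 /
      (pochR 2 p.1 * pochR 2 p.2 * (Nat.factorial p.1 : ℝ) * (Nat.factorial p.2 : ℝ)) *
      x ^ p.1 * y ^ p.2
      = ((p.2 + 1 + p.1).choose p.1 : ℝ) / (p.1 + 1) * x ^ p.1 * y ^ p.2 :=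
    fun p => term_eq x y p.1 p.2
  rw [appellF2R, tsum_congr hterm]
  set f : ℕ × ℕ → ℝ := fun p => ((p.2 + 1 + p.1).choose p.1 : ℝ) / (p.1 + 1) * x ^ p.1 * y ^ p.2
    with hf
  have hnonneg : 0 ≤ f := by
    intro p
    have : (0:ℝ) ≤ ((p.2 + 1 + p.1).choose p.1 : ℝ) / (p.1 + 1) * x ^ p.1 * y ^ p.2 := by
      positivity
    simpa [hf] using this
  have hrow : ∀ i : ℕ, Summable fun j => f (i, j) := fun i => (hinner i).summable
  have hrowsum : ∀ i : ℕ, ∑' j, f (i, j) =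
      (1 / (1 - y) ^ (i + 1) - 1) * (x ^ i / (((i : ℝ) + 1) * y)) :=
    fun i => (hinner i).tsum_eq
  have hsummable : Summable f := by
    rw [summable_prod_of_nonneg hnonneg]
    refine ⟨hrow, ?_⟩
    have := houter.summable
    apply this.congr
    intro i
    exact (hrowsum i).symm
  rw [Summable.tsum_prod' hsummable hrow]
  calc ∑' (i : ℕ), ∑' (j : ℕ), f (i, j)
      = ∑' (i : ℕ), (1 / (1 - y) ^ (i + 1) - 1) * (x ^ i / (((i : ℝ) + 1) * y)) :=
        tsum_congr hrowsum
    _ = (Real.log (1 - x) + Real.log (1 - y) - Real.log (1 - x - y)) / (x * y) :=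
        houter.tsum_eq
end

section
/- Let a be a real number with a < 2 and a ≠ 1, and let x ∈ (0,1) be real. Then the limiting boundary value of Appell's F₂ along the ray toward the point (x, 1−x) on the singular line u + v = 1 is lim_{t→1⁻} F₂(a; 1, 1; 2, 2; t x, t(1−x)) = (1 − (1−x)^{2−a} − x^{2−a}) / ((1−a)(2−a) x (1−x)), where the powers are real powers of positive reals. -/
open Topology Filter

lemma pochR_zero (c : ℝ) : pochR c 0 = 1 := by simp [pochR]

lemma pochR_succ (c : ℝ) (k : ℕ) : pochR c (k + 1) = pochR c k * (c + k) := by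
  simp [pochR, Finset.prod_range_succ]

lemma pochR_one_s4 (n : ℕ) : pochR 1 n = n.factorial := by
  induction n with
  | zero => simp [pochR_zero]
  | succ k ih => rw [pochR_succ, ih, Nat.factorial_succ]; push_cast; ring

lemma pochR_two_s4 (n : ℕ) : pochR 2 n = (n + 1).factorial := by
  induction n with
  | zero => simp [pochR_zero]
  | succ k ih =>
    have h : (k+1+1).factorial = (k+2) * (k+1).factorial := by
      rw [show k+1+1 = k+2 from rfl, Nat.factorial_succ]
    rw [pochR_succ, ih, h]
    push_cast; ring

lemma pochR_add (c : ℝ) (m n : ℕ) : pochR c (m + n) = pochR c m * pochR (c + m) n := by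
  induction n with
  | zero => simp [pochR_zero]
  | succ k ih =>
    rw [← Nat.add_assoc, pochR_succ, ih, pochR_succ]
    push_cast; ring

lemma pochR_nonneg {c : ℝ} (hc : 0 ≤ c) (k : ℕ) : 0 ≤ pochR c k :=
  Finset.prod_nonneg fun i _ => by positivity

lemma abs_pochR_le (c : ℝ) (k : ℕ) : |pochR c k| ≤ pochR |c| k := by
  rw [pochR, pochR, Finset.abs_prod]
  exact Finset.prod_le_prod (fun i _ => abs_nonneg _)
    (fun i _ => (abs_add_le _ _).trans (by simp))

section ratio
variable {c r : ℝ}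

lemma eventually_key (c : ℝ) {r r' : ℝ} (hr0 : 0 ≤ r) (h : r < r') :
    ∀ᶠ n : ℕ in atTop, (|c| + n) * r ≤ r' * n := by
  obtain ⟨N, hN⟩ := exists_nat_ge (|c| * r / (r' - r))
  filter_upwards [eventually_ge_atTop N] with n hn
  have hn' : |c| * r / (r' - r) ≤ (n : ℝ) := hN.trans (by exact_mod_cast hn)
  rw [div_le_iff₀ (by linarith)] at hn'
  nlinarith [Nat.cast_nonneg (α := ℝ) n]

lemma summable_pochR_geom (c : ℝ) (hr0 : 0 ≤ r) (hr : r < 1) :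
    Summable (fun n : ℕ => pochR c n * r ^ n / n.factorial) := by
  apply summable_of_ratio_norm_eventually_le (r := (1 + r)/2) (by linarith)
  filter_upwards [eventually_key c hr0 (show r < (1+r)/2 by linarith)] with n hn
  have hfac : ((n+1).factorial : ℝ) = (n+1) * n.factorial := by
    rw [Nat.factorial_succ]; push_cast; ring
  have hne : (n.factorial : ℝ) ≠ 0 := by positivity
  have hid : pochR c (n+1) * r ^ (n+1) / (n+1).factorial
      = (pochR c n * r ^ n / n.factorial) * ((c + n) * r / (n+1)) := by
    rw [pochR_succ, pow_succ, hfac]; field_simp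
  rw [hid, norm_mul]
  have hb : ‖(c + n) * r / ((n : ℝ)+1)‖ ≤ (1 + r)/2 := by
    rw [norm_div, norm_mul, Real.norm_eq_abs, Real.norm_eq_abs, Real.norm_eq_abs,
      abs_of_nonneg hr0, abs_of_nonneg (by positivity : (0:ℝ) ≤ (n:ℝ)+1)]
    rw [div_le_iff₀ (by positivity)]
    have h1 : |c + n| ≤ |c| + n := by
      calc |c + n| ≤ |c| + |(n:ℝ)| := abs_add_le _ _
      _ = |c| + n := by rw [Nat.abs_cast]
    have h2 : |c + n| * r ≤ (|c| + n) * r := by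
      exact mul_le_mul_of_nonneg_right h1 hr0
    have h3 : (1+r)/2 * n ≤ (1+r)/2 * ((n:ℝ)+1) := by nlinarith
    linarith
  calc ‖pochR c n * r ^ n / n.factorial‖ * ‖(c + n) * r / ((n : ℝ)+1)‖
      ≤ ‖pochR c n * r ^ n / n.factorial‖ * ((1+r)/2) :=
        mul_le_mul_of_nonneg_left hb (norm_nonneg _)
    _ = (1+r)/2 * ‖pochR c n * r ^ n / n.factorial‖ := mul_comm _ _

lemma summable_pochR_deriv (c : ℝ) (hr0 : 0 < r) (hr : r < 1) :
    Summable (fun n : ℕ => pochR c n * ((n : ℝ) * r ^ (n - 1)) / n.factorial) := by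
  apply summable_of_ratio_norm_eventually_le (r := (1 + r)/2) (by linarith)
  filter_upwards [eventually_key c hr0.le (show r < (1+r)/2 by linarith),
    eventually_ge_atTop 1] with n hn hn1
  have hfac : ((n+1).factorial : ℝ) = (n+1) * n.factorial := by
    rw [Nat.factorial_succ]; push_cast; ring
  have hne : (n.factorial : ℝ) ≠ 0 := by positivity
  have hnne : (n : ℝ) ≠ 0 := by
    exact_mod_cast Nat.one_le_iff_ne_zero.mp hn1
  have hpow : r ^ (n - 1) * r = r ^ n := by
    rw [← pow_succ, Nat.sub_add_cancel hn1]
  have hid : pochR c (n+1) * (((n:ℕ)+1 : ℝ) * r ^ (n+1-1)) / (n+1).factorial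
      = (pochR c n * ((n:ℝ) * r ^ (n-1)) / n.factorial) * ((c + n) * r / n) := by
    rw [pochR_succ, hfac, show n+1-1 = n from rfl, ← hpow]
    field_simp
  rw [show ((n:ℕ)+1 : ℝ) = ((n+1 : ℕ) : ℝ) by push_cast; ring] at hid
  rw [hid, norm_mul]
  have hb : ‖(c + n) * r / (n : ℝ)‖ ≤ (1 + r)/2 := by
    rw [norm_div, norm_mul, Real.norm_eq_abs, Real.norm_eq_abs, Real.norm_eq_abs,
      abs_of_nonneg hr0.le, Nat.abs_cast]
    have hnpos : (0:ℝ) < n := lt_of_le_of_ne (Nat.cast_nonneg n) (Ne.symm hnne)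
    rw [div_le_iff₀ hnpos]
    have h1 : |c + n| ≤ |c| + n := by
      calc |c + n| ≤ |c| + |(n:ℝ)| := abs_add_le _ _
      _ = |c| + n := by rw [Nat.abs_cast]
    have h2 : |c + n| * r ≤ (|c| + n) * r := mul_le_mul_of_nonneg_right h1 hr0.le
    linarith
  calc ‖pochR c n * ((n:ℝ) * r ^ (n-1)) / n.factorial‖ * ‖(c + n) * r / (n : ℝ)‖
      ≤ ‖pochR c n * ((n:ℝ) * r ^ (n-1)) / n.factorial‖ * ((1+r)/2) :=
        mul_le_mul_of_nonneg_left hb (norm_nonneg _)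
    _ = (1+r)/2 * ‖pochR c n * ((n:ℝ) * r ^ (n-1)) / n.factorial‖ := mul_comm _ _

end ratio

noncomputable def binF (c s : ℝ) : ℝ := ∑' k : ℕ, pochR c k * s ^ k / k.factorial
noncomputable def binD (c s : ℝ) : ℝ := ∑' k : ℕ, pochR c (k+1) * s ^ k / k.factorial

section bin
variable (c : ℝ) {y : ℝ}

/-- the summand functions and their derivatives -/
noncomputable def gg (c : ℝ) (n : ℕ) (z : ℝ) : ℝ := pochR c n / n.factorial * z ^ n
noncomputable def gg' (c : ℝ) (n : ℕ) (z : ℝ) : ℝ :=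
  pochR c n / n.factorial * ((n : ℝ) * z ^ (n - 1))

lemma gg'_bound (n : ℕ) {r z : ℝ} (hz : |z| ≤ r) :
    ‖gg' c n z‖ ≤ pochR |c| n * ((n : ℝ) * r ^ (n - 1)) / n.factorial := by
  have hr0 : 0 ≤ r := (abs_nonneg z).trans hz
  rw [gg', Real.norm_eq_abs, abs_mul, abs_mul, abs_div, Nat.abs_cast, Nat.abs_cast, abs_pow]
  have h1 : |z| ^ (n - 1) ≤ r ^ (n - 1) := pow_le_pow_left₀ (abs_nonneg z) hz _
  have h2 : |pochR c n| / (n.factorial : ℝ) ≤ pochR |c| n / n.factorial :=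
    div_le_div_of_nonneg_right (abs_pochR_le c n) (by positivity)
  calc |pochR c n| / (n.factorial : ℝ) * ((n : ℝ) * |z| ^ (n - 1))
      ≤ pochR |c| n / n.factorial * ((n : ℝ) * r ^ (n - 1)) := by
        apply mul_le_mul h2 (mul_le_mul_of_nonneg_left h1 (Nat.cast_nonneg n))
          (by positivity) (div_nonneg (pochR_nonneg (abs_nonneg c) n) (by positivity))
    _ = pochR |c| n * ((n : ℝ) * r ^ (n - 1)) / n.factorial := by ring

lemma summable_gg' (h0 : 0 ≤ y) (h1 : y < 1) : Summable (fun n => gg' c n y) := by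
  set r : ℝ := (1 + y) / 2 with hr
  have hu := summable_pochR_deriv |c| (show 0 < r by rw [hr]; linarith) (by rw [hr]; linarith)
  exact hu.of_norm_bounded fun n => gg'_bound c n (by rw [abs_of_nonneg h0]; linarith)

lemma gg'_succ (n : ℕ) : gg' c (n+1) y = pochR c (n+1) * y ^ n / n.factorial := by
  have hf : ((n+1).factorial : ℝ) = ((n:ℝ)+1) * n.factorial := by
    rw [Nat.factorial_succ]; push_cast; ring
  have h1 : ((n:ℝ) + 1) ≠ 0 := by positivity
  have h2 : (n.factorial : ℝ) ≠ 0 := by positivity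
  simp only [gg', show n + 1 - 1 = n from rfl, hf]
  push_cast
  field_simp

lemma summable_binD (h0 : 0 ≤ y) (h1 : y < 1) :
    Summable (fun k : ℕ => pochR c (k+1) * y ^ k / k.factorial) := by
  have := (summable_nat_add_iff 1).2 (summable_gg' c h0 h1)
  exact this.congr fun n => gg'_succ c n

lemma hasSum_binD (h0 : 0 ≤ y) (h1 : y < 1) :
    HasSum (fun k : ℕ => pochR c (k+1) * y ^ k / k.factorial) (binD c y) :=
  (summable_binD c h0 h1).hasSum

lemma tsum_gg' (h0 : 0 ≤ y) (h1 : y < 1) : ∑' n, gg' c n y = binD c y := by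
  have hfe : (fun n => gg' c (n+1) y) = fun k => pochR c (k+1) * y ^ k / k.factorial :=
    funext fun n => gg'_succ c n
  have hs : HasSum (fun n => gg' c (n+1) y) (binD c y) := by
    rw [hfe]; exact hasSum_binD c h0 h1
  have h2 := (hasSum_nat_add_iff (f := fun n => gg' c n y) 1).1 hs
  have h0' : gg' c 0 y = 0 := by simp [gg']
  simpa [h0'] using h2.tsum_eq

lemma hasDerivAt_binF (h0 : 0 ≤ y) (h1 : y < 1) : HasDerivAt (binF c) (binD c y) y := by
  set r : ℝ := (1 + y)/2 with hrdef
  have hr0 : 0 < r := by rw [hrdef]; linarith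
  have hr1 : r < 1 := by rw [hrdef]; linarith
  have hyr : y < r := by rw [hrdef]; linarith
  have hu := summable_pochR_deriv |c| hr0 hr1
  have key : HasDerivAt (fun z => ∑' n, gg c n z) (∑' n, gg' c n y) y := by
    apply hasDerivAt_tsum_of_isPreconnected hu (isOpen_Ioo (a := -r) (b := r))
      isPreconnected_Ioo (fun n z _ => HasDerivAt.const_mul _ (hasDerivAt_pow n z))
      (fun n z hz => gg'_bound c n (le_of_lt (abs_lt.2 ⟨hz.1, hz.2⟩)))
      (Set.mem_Ioo.2 ⟨by linarith, hr0⟩) ?_ (Set.mem_Ioo.2 ⟨by linarith, hyr⟩)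
    exact (summable_pochR_geom c le_rfl one_pos).congr
      (fun n => by
        change pochR c n * (0:ℝ) ^ n / n.factorial = pochR c n / n.factorial * (0:ℝ) ^ n
        ring)
  have hFeq : binF c = fun z => ∑' n, gg c n z := by
    funext z
    exact tsum_congr fun n => by simp only [gg]; ring
  rw [hFeq, ← tsum_gg' c h0 h1]
  exact key

lemma one_sub_mul_binD (h0 : 0 ≤ y) (h1 : y < 1) :
    (1 - y) * binD c y = c * binF c y := by
  have hF : HasSum (fun k : ℕ => pochR c k * y ^ k / k.factorial) (binF c y) :=
    (summable_pochR_geom c h0 h1).hasSum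
  have hD := hasSum_binD c h0 h1
  have hsD : HasSum (fun k : ℕ => pochR c (k+1) * y ^ (k+1) / k.factorial) (y * binD c y) := by
    have h2 := hD.mul_left y
    have hfe : (fun k : ℕ => y * (pochR c (k+1) * y ^ k / k.factorial))
        = fun k : ℕ => pochR c (k+1) * y ^ (k+1) / k.factorial := by
      funext k; rw [pow_succ]; ring
    rwa [hfe] at h2
  have hshift : HasSum (fun k : ℕ => pochR c k * (k : ℝ) * y ^ k / k.factorial)
      (y * binD c y) := by
    have hfe : (fun n : ℕ => pochR c (n+1) * ((n:ℕ)+1 : ℝ) * y ^ (n+1) / (n+1).factorial)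
        = fun k : ℕ => pochR c (k+1) * y ^ (k+1) / k.factorial := by
      funext n
      have hf : ((n+1).factorial : ℝ) = ((n:ℝ)+1) * n.factorial := by
        rw [Nat.factorial_succ]; push_cast; ring
      have h1 : ((n:ℝ) + 1) ≠ 0 := by positivity
      have h2 : (n.factorial : ℝ) ≠ 0 := by positivity
      rw [hf]; field_simp
    have hs2 : HasSum (fun n : ℕ => pochR c (n+1) * ((n:ℕ)+1 : ℝ) * y ^ (n+1) / (n+1).factorial)
        (y * binD c y) := by rw [hfe]; exact hsD
    have hs3 := (hasSum_nat_add_iff (f := fun k : ℕ => pochR c k * (k : ℝ) * y ^ k / k.factorial)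
      1).1 (by exact_mod_cast hs2)
    simpa using hs3
  have hdiff := hD.sub hshift
  have hfe2 : (fun k : ℕ => pochR c (k+1) * y ^ k / k.factorial
      - pochR c k * (k : ℝ) * y ^ k / k.factorial)
      = fun k : ℕ => c * (pochR c k * y ^ k / k.factorial) := by
    funext k; rw [pochR_succ]; ring
  rw [hfe2] at hdiff
  have := hdiff.unique (hF.mul_left c)
  linarith [this]

lemma binF_zero : binF c 0 = 1 := by
  rw [binF, tsum_eq_single 0 ?_]
  · simp [pochR_zero]
  · intro k hk
    rw [zero_pow hk]; ring

lemma binF_eq {s : ℝ} (h0 : 0 ≤ s) (h1 : s < 1) : binF c s = (1 - s) ^ (-c) := by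
  have key : ∀ z ∈ Set.Icc (0:ℝ) s, binF c z * (1-z) ^ c = binF c 0 * (1-(0:ℝ)) ^ c := by
    apply constant_of_has_deriv_right_zero
    · intro z hz
      have hz1 : z < 1 := lt_of_le_of_lt hz.2 h1
      have hF := hasDerivAt_binF c hz.1 hz1
      have h1z : (0:ℝ) < 1 - z := by linarith
      have hR : HasDerivAt (fun w : ℝ => (1-w) ^ c) (c * (1-z) ^ (c-1) * (-1)) z :=
        (Real.hasDerivAt_rpow_const (Or.inl h1z.ne')).comp z
          ((hasDerivAt_id z).const_sub 1)
      exact ((hF.mul hR).continuousAt).continuousWithinAt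
    · intro z hz
      have hz1 : z < 1 := hz.2.trans h1
      have hF := hasDerivAt_binF c hz.1 hz1
      have h1z : (0:ℝ) < 1 - z := by linarith
      have hR : HasDerivAt (fun w : ℝ => (1-w) ^ c) (c * (1-z) ^ (c-1) * (-1)) z :=
        (Real.hasDerivAt_rpow_const (Or.inl h1z.ne')).comp z
          ((hasDerivAt_id z).const_sub 1)
      have hprod := hF.mul hR
      have hzero : binD c z * (1-z) ^ c + binF c z * (c * (1-z) ^ (c-1) * (-1)) = 0 := by
        have hpow : (1-z) ^ c = (1-z) ^ (c-1) * (1-z) := by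
          rw [← Real.rpow_add_one h1z.ne' (c-1)]; norm_num
        have hid := one_sub_mul_binD c hz.1 hz1
        rw [hpow]; linear_combination (1-z) ^ (c-1) * hid
      rw [hzero] at hprod
      exact hprod.hasDerivWithinAt
  have := key s (Set.mem_Icc.2 ⟨h0, le_rfl⟩)
  rw [binF_zero] at this
  have hpos : (0:ℝ) < (1-s) ^ c := Real.rpow_pos_of_pos (by linarith) c
  rw [Real.rpow_neg (by linarith)]
  field_simp at this ⊢
  rw [sub_zero, Real.one_rpow] at this; linarith [this]

end bin

lemma hasSum_binomial (c : ℝ) {s : ℝ} (h0 : 0 ≤ s) (h1 : s < 1) :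
    HasSum (fun k : ℕ => pochR c k * s ^ k / k.factorial) ((1 - s) ^ (-c)) := by
  have h := (summable_pochR_geom c h0 h1).hasSum
  have h2 := binF_eq c h0 h1
  rw [binF] at h2
  rwa [h2] at h

section double
variable (c : ℝ) {x y : ℝ}

lemma rpow_aux {y : ℝ} (h1y : 0 < 1 - y) (c : ℝ) (i : ℕ) :
    (1 - y) ^ (-(c + (i:ℝ))) = (1 - y) ^ (-c) * ((1 - y) ^ i)⁻¹ := by
  rw [show -(c + (i:ℝ)) = -c + -(i:ℝ) by ring, Real.rpow_add h1y]
  congr 1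
  rw [Real.rpow_neg h1y.le, Real.rpow_natCast]

lemma row_split (i j : ℕ) :
    pochR c (i + j) * x ^ i * y ^ j / ((i.factorial : ℝ) * j.factorial)
      = (pochR c i * x ^ i / i.factorial) * (pochR (c + i) j * y ^ j / j.factorial) := by
  rw [pochR_add]
  have h1 : (i.factorial : ℝ) ≠ 0 := by positivity
  have h2 : (j.factorial : ℝ) ≠ 0 := by positivity
  field_simp

lemma hasSum_row (hx : 0 ≤ x) (hy : 0 ≤ y) (hxy : x + y < 1) (i : ℕ) :
    HasSum (fun j : ℕ => pochR c (i + j) * x ^ i * y ^ j / ((i.factorial : ℝ) * j.factorial))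
      ((pochR c i * x ^ i / i.factorial) * (1 - y) ^ (-(c + (i:ℝ)))) := by
  have hy1 : y < 1 := by linarith
  have h := (hasSum_binomial (c + i) hy hy1).mul_left (pochR c i * x ^ i / i.factorial)
  have hfe : (fun j : ℕ => (pochR c i * x ^ i / i.factorial) *
      (pochR (c + i) j * y ^ j / j.factorial))
      = fun j : ℕ => pochR c (i + j) * x ^ i * y ^ j / ((i.factorial : ℝ) * j.factorial) :=
    funext fun j => (row_split c i j).symm
  exact hfe ▸ h

lemma rowval_eq (hx : 0 ≤ x) (hy : 0 ≤ y) (hxy : x + y < 1) (i : ℕ) :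
    (pochR c i * x ^ i / i.factorial) * (1 - y) ^ (-(c + (i:ℝ)))
      = (1 - y) ^ (-c) * (pochR c i * (x / (1 - y)) ^ i / i.factorial) := by
  have h1y : (0:ℝ) < 1 - y := by linarith
  rw [rpow_aux h1y, div_pow]
  have : ((1 - y) ^ i : ℝ) ≠ 0 := by positivity
  field_simp

lemma hasSum_rowvals (hx : 0 ≤ x) (hy : 0 ≤ y) (hxy : x + y < 1) :
    HasSum (fun i : ℕ => (pochR c i * x ^ i / i.factorial) * (1 - y) ^ (-(c + (i:ℝ))))
      ((1 - (x + y)) ^ (-c)) := by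
  have h1y : (0:ℝ) < 1 - y := by linarith
  have hq0 : 0 ≤ x / (1 - y) := div_nonneg hx h1y.le
  have hq1 : x / (1 - y) < 1 := (div_lt_one h1y).2 (by linarith)
  have h := (hasSum_binomial c hq0 hq1).mul_left ((1 - y) ^ (-c))
  have hval : (1 - y) ^ (-c) * (1 - x / (1 - y)) ^ (-c) = (1 - (x + y)) ^ (-c) := by
    have he : 1 - x / (1 - y) = (1 - (x + y)) / (1 - y) := by
      field_simp; ring
    rw [he, Real.div_rpow (by linarith) h1y.le]
    have : (1 - y) ^ (-c) ≠ 0 := (Real.rpow_pos_of_pos h1y _).ne'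
    field_simp
  rw [hval] at h
  have hfe : (fun i : ℕ => (1 - y) ^ (-c) * (pochR c i * (x / (1 - y)) ^ i / i.factorial))
      = fun i : ℕ => (pochR c i * x ^ i / i.factorial) * (1 - y) ^ (-(c + (i:ℝ))) :=
    funext fun i => (rowval_eq c hx hy hxy i).symm
  exact hfe ▸ h

lemma summable_double (hx : 0 ≤ x) (hy : 0 ≤ y) (hxy : x + y < 1) :
    Summable (fun p : ℕ × ℕ =>
      pochR c (p.1 + p.2) * x ^ p.1 * y ^ p.2 / ((p.1.factorial : ℝ) * p.2.factorial)) := by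
  apply Summable.of_norm_bounded (g := fun p : ℕ × ℕ =>
      pochR |c| (p.1 + p.2) * x ^ p.1 * y ^ p.2 / ((p.1.factorial : ℝ) * p.2.factorial))
  · -- Summable of the majorant
    apply (summable_prod_of_nonneg ?_).2
    constructor
    · intro i
      exact (hasSum_row |c| hx hy hxy i).summable
    · apply Summable.congr (((hasSum_rowvals |c| hx hy hxy).summable))
      intro i
      exact ((hasSum_row |c| hx hy hxy i).tsum_eq).symm
    · intro p
      have h1 : 0 ≤ pochR |c| (p.1 + p.2) := pochR_nonneg (abs_nonneg c) _
      positivity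
  · intro p
    rw [Real.norm_eq_abs, abs_div, abs_mul, abs_mul, abs_pow, abs_pow,
      abs_of_nonneg hx, abs_of_nonneg hy]
    have habs : |((p.1.factorial : ℝ) * p.2.factorial)| = (p.1.factorial : ℝ) * p.2.factorial := by
      rw [abs_of_pos]; positivity
    rw [habs]
    apply div_le_div_of_nonneg_right ?_ (by positivity)
    apply mul_le_mul_of_nonneg_right ?_ (by positivity)
    apply mul_le_mul_of_nonneg_right (abs_pochR_le c _) (by positivity)

lemma hasSum_double (hx : 0 ≤ x) (hy : 0 ≤ y) (hxy : x + y < 1) :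
    HasSum (fun p : ℕ × ℕ =>
      pochR c (p.1 + p.2) * x ^ p.1 * y ^ p.2 / ((p.1.factorial : ℝ) * p.2.factorial))
      ((1 - (x + y)) ^ (-c)) := by
  have hsum := summable_double c hx hy hxy
  have hfib := hsum.hasSum.prod_fiberwise (fun i => hasSum_row c hx hy hxy i)
  have heq := hfib.unique (hasSum_rowvals c hx hy hxy)
  exact heq ▸ hsum.hasSum
end double

lemma pochR_zero' (c : ℝ) : pochR c 0 = 1 := by simp [pochR]

lemma hasSum_congr' {ι : Type*} {f g : ι → ℝ} {a : ℝ} (h : ∀ n, f n = g n)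
    (hf : HasSum f a) : HasSum g a := (funext h : f = g) ▸ hf

section shift
variable (c : ℝ) {x y : ℝ}

lemma hasSum_shift (hx : 0 < x) (hy : 0 < y) (hxy : x + y < 1) :
    HasSum (fun p : ℕ × ℕ => pochR c ((p.1+1) + (p.2+1)) * x ^ (p.1+1) * y ^ (p.2+1)
      / (((p.1+1).factorial : ℝ) * (p.2+1).factorial))
      ((1 - (x+y)) ^ (-c) - (1-y) ^ (-c) - (1-x) ^ (-c) + 1) := by
  set f : ℕ × ℕ → ℝ := fun p =>
    pochR c (p.1 + p.2) * x ^ p.1 * y ^ p.2 / ((p.1.factorial : ℝ) * p.2.factorial) with hfdef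
  set rowv : ℕ → ℝ := fun i =>
    (pochR c i * x ^ i / i.factorial) * (1 - y) ^ (-(c + (i:ℝ))) with hrowvdef
  have hx1 : x < 1 := by linarith
  have hinj : Function.Injective (fun p : ℕ × ℕ => (p.1 + 1, p.2 + 1)) := by
    intro p q h
    simp only [Prod.mk.injEq, Prod.ext_iff] at h ⊢
    omega
  have hgsum : Summable (fun p : ℕ × ℕ => f (p.1 + 1, p.2 + 1)) :=
    (summable_double c hx.le hy.le hxy).comp_injective hinj
  have hfib : ∀ i : ℕ, HasSum (fun j : ℕ => f (i + 1, j + 1))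
      (rowv (i+1) - f (i+1, 0)) := by
    intro i
    have hrow : HasSum (fun j : ℕ => f (i+1, j)) (rowv (i+1)) :=
      hasSum_row c hx.le hy.le hxy (i+1)
    have h2 := (hasSum_nat_add_iff' (f := fun j : ℕ => f (i+1, j)) 1).2 hrow
    simpa using h2
  have hvals : HasSum (fun i : ℕ => rowv (i+1) - f (i+1, 0))
      (((1 - (x+y)) ^ (-c) - (1-y) ^ (-c)) - ((1-x) ^ (-c) - 1)) := by
    apply HasSum.sub
    · have hrv : HasSum rowv ((1 - (x+y)) ^ (-c)) := hasSum_rowvals c hx.le hy.le hxy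
      have h := (hasSum_nat_add_iff' (f := rowv) 1).2 hrv
      have h0 : rowv 0 = (1 - y) ^ (-c) := by
        simp [hrowvdef, pochR_zero']
      simpa [h0] using h
    · have hcol : HasSum (fun i : ℕ => f (i, 0)) ((1-x) ^ (-c)) := by
        apply hasSum_congr' ?_ (hasSum_binomial c hx.le hx1)
        intro i
        simp [hfdef]
      have h := (hasSum_nat_add_iff' (f := fun i : ℕ => f (i, 0)) 1).2 hcol
      simpa [hfdef, pochR_zero'] using h
  have hfib2 := hgsum.hasSum.prod_fiberwise hfib
  have heq := hfib2.unique hvals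
  have hgoal : HasSum (fun p : ℕ × ℕ => f (p.1 + 1, p.2 + 1))
      ((1 - (x+y)) ^ (-c) - (1-y) ^ (-c) - (1-x) ^ (-c) + 1) := by
    rw [show (1 - (x+y)) ^ (-c) - (1-y) ^ (-c) - (1-x) ^ (-c) + 1
      = (((1 - (x+y)) ^ (-c) - (1-y) ^ (-c)) - ((1-x) ^ (-c) - 1)) by ring, ← heq]
    exact hgsum.hasSum
  exact hgoal

end shift

lemma appell_eq (a : ℝ) (ha1 : a ≠ 1) (ha2 : a ≠ 2) {x y : ℝ} (hx : 0 < x) (hy : 0 < y)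
    (hxy : x + y < 1) :
    appellF2R a 1 1 2 2 x y =
      ((1 - (x+y)) ^ (2-a) - (1-y) ^ (2-a) - (1-x) ^ (2-a) + 1) / ((a-1) * (a-2) * x * y) := by
  have hS := hasSum_shift (a-2) hx hy hxy
  rw [show -(a-2) = 2-a by ring] at hS
  have h1 : a - 1 ≠ 0 := sub_ne_zero.2 ha1
  have h2 : a - 2 ≠ 0 := sub_ne_zero.2 ha2
  have key : ∀ p : ℕ × ℕ, pochR a (p.1 + p.2) * pochR 1 p.1 * pochR 1 p.2 /
      (pochR 2 p.1 * pochR 2 p.2 * (Nat.factorial p.1 : ℝ) * (Nat.factorial p.2 : ℝ)) *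
      x ^ p.1 * y ^ p.2
      = (pochR (a-2) ((p.1+1) + (p.2+1)) * x ^ (p.1+1) * y ^ (p.2+1) /
        (((p.1+1).factorial : ℝ) * (p.2+1).factorial)) / ((a-1)*(a-2)*x*y) := by
    intro ⟨i, j⟩
    have hpoch : pochR (a-2) ((i+1) + (j+1)) = (a-2)*(a-1) * pochR a (i+j) := by
      have hp2 : pochR (a-2) 2 = (a-2)*(a-1) := by
        rw [pochR, Finset.prod_range_succ, Finset.prod_range_one]
        push_cast; ring
      have hadd := pochR_add (a-2) 2 (i+j)
      have hc : a - 2 + ((2:ℕ):ℝ) = a := by push_cast; ring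
      rw [hc] at hadd
      rw [show (i+1)+(j+1) = 2 + (i+j) by omega, hadd, hp2]
    simp only
    rw [pochR_one_s4, pochR_one_s4, pochR_two_s4, pochR_two_s4, hpoch]
    have f1 : ((i+1).factorial : ℝ) = ((i:ℝ)+1) * i.factorial := by
      rw [Nat.factorial_succ]; push_cast; ring
    have f2 : ((j+1).factorial : ℝ) = ((j:ℝ)+1) * j.factorial := by
      rw [Nat.factorial_succ]; push_cast; ring
    rw [f1, f2, pow_succ, pow_succ]
    have hi : (i.factorial : ℝ) ≠ 0 := by positivity
    have hj : (j.factorial : ℝ) ≠ 0 := by positivity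
    have hi1 : ((i:ℝ)+1) ≠ 0 := by positivity
    have hj1 : ((j:ℝ)+1) ≠ 0 := by positivity
    field_simp
  rw [appellF2R, tsum_congr key]
  exact (hS.div_const ((a-1)*(a-2)*x*y)).tsum_eq

theorem stmt_4 (a x : ℝ) (ha2 : a < 2) (ha1 : a ≠ 1) (hx0 : 0 < x) (hx1 : x < 1) :
    Tendsto (fun t : ℝ => appellF2R a 1 1 2 2 (t * x) (t * (1 - x))) (𝓝[<] 1)
      (𝓝 ((1 - (1 - x) ^ (2 - a) - x ^ (2 - a)) / ((1 - a) * (2 - a) * x * (1 - x)))) := by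
  have ha2' : a ≠ 2 := ne_of_lt ha2
  have h2a : (0:ℝ) < 2 - a := by linarith
  have h1 : a - 1 ≠ 0 := sub_ne_zero.2 ha1
  have h2 : a - 2 ≠ 0 := sub_ne_zero.2 ha2'
  have hev : (fun t : ℝ =>
      ((1 - t) ^ (2-a) - (1 - t*(1-x)) ^ (2-a) - (1 - t*x) ^ (2-a) + 1) /
        ((a-1) * (a-2) * (t*x) * (t*(1-x))))
      =ᶠ[𝓝[<] (1:ℝ)] (fun t : ℝ => appellF2R a 1 1 2 2 (t * x) (t * (1 - x))) := by
    filter_upwards [Ioo_mem_nhdsLT_of_mem (show (1:ℝ) ∈ Set.Ioc 0 1 from ⟨one_pos, le_rfl⟩)]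
      with t ht
    have hxt : 0 < t * x := mul_pos ht.1 hx0
    have hyt : 0 < t * (1-x) := mul_pos ht.1 (by linarith)
    have hsum : t*x + t*(1-x) < 1 := by nlinarith [ht.2]
    rw [appell_eq a ha1 ha2' hxt hyt hsum, show t*x + t*(1-x) = t by ring]
  apply Tendsto.congr' hev
  have hnum : Tendsto (fun t:ℝ =>
      (1 - t) ^ (2-a) - (1 - t*(1-x)) ^ (2-a) - (1 - t*x) ^ (2-a) + 1) (𝓝 1)
      (𝓝 (0 - x ^ (2-a) - (1-x) ^ (2-a) + 1)) := by
    have hA : Tendsto (fun t:ℝ => (1-t) ^ (2-a)) (𝓝 1) (𝓝 0) := by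
      have hc : ContinuousAt (fun s : ℝ => s ^ (2-a)) 0 :=
        Real.continuousAt_rpow_const 0 (2-a) (Or.inr h2a.le)
      have hin : Tendsto (fun t:ℝ => 1 - t) (𝓝 (1:ℝ)) (𝓝 0) := by
        have := tendsto_const_nhds (x := (1:ℝ)) (f := 𝓝 (1:ℝ)) |>.sub tendsto_id
        simpa using this
      have := hc.tendsto.comp hin
      simpa [Function.comp_def, Real.zero_rpow h2a.ne'] using this
    have hB : Tendsto (fun t:ℝ => (1 - t*(1-x)) ^ (2-a)) (𝓝 1) (𝓝 (x ^ (2-a))) := by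
      have hc : ContinuousAt (fun s : ℝ => s ^ (2-a)) x :=
        Real.continuousAt_rpow_const _ _ (Or.inr h2a.le)
      have hin : Tendsto (fun t:ℝ => 1 - t*(1-x)) (𝓝 (1:ℝ)) (𝓝 x) := by
        have : Tendsto (fun t:ℝ => 1 - t*(1-x)) (𝓝 (1:ℝ)) (𝓝 (1 - 1*(1-x))) :=
          tendsto_const_nhds.sub (tendsto_id.mul tendsto_const_nhds)
        simpa [show (1:ℝ) - 1*(1-x) = x by ring] using this
      exact hc.tendsto.comp hin
    have hC : Tendsto (fun t:ℝ => (1 - t*x) ^ (2-a)) (𝓝 1) (𝓝 ((1-x) ^ (2-a))) := by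
      have hc : ContinuousAt (fun s : ℝ => s ^ (2-a)) (1-x) :=
        Real.continuousAt_rpow_const _ _ (Or.inr h2a.le)
      have hin : Tendsto (fun t:ℝ => 1 - t*x) (𝓝 (1:ℝ)) (𝓝 (1-x)) := by
        have : Tendsto (fun t:ℝ => 1 - t*x) (𝓝 (1:ℝ)) (𝓝 (1 - 1*x)) :=
          tendsto_const_nhds.sub (tendsto_id.mul tendsto_const_nhds)
        simpa [show (1:ℝ) - 1*x = 1-x by ring] using this
      exact hc.tendsto.comp hin
    exact ((hA.sub hB).sub hC).add tendsto_const_nhds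
  have hden : Tendsto (fun t:ℝ => (a-1) * (a-2) * (t*x) * (t*(1-x))) (𝓝 1)
      (𝓝 ((a-1) * (a-2) * (1*x) * (1*(1-x)))) := by
    exact Continuous.tendsto (by continuity) 1
  have hdne : (a-1) * (a-2) * ((1:ℝ)*x) * ((1:ℝ)*(1-x)) ≠ 0 := by
    have hx1' : (1:ℝ) - x ≠ 0 := by intro h; nlinarith
    simp only [one_mul]
    exact mul_ne_zero (mul_ne_zero (mul_ne_zero h1 h2) hx0.ne') hx1'
  have hG := (hnum.div hden hdne).mono_left (nhdsWithin_le_nhds (s := Set.Iio (1:ℝ)))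
  have hval : (0 - x ^ (2-a) - (1-x) ^ (2-a) + 1) / ((a-1) * (a-2) * ((1:ℝ)*x) * ((1:ℝ)*(1-x)))
      = (1 - (1 - x) ^ (2 - a) - x ^ (2 - a)) / ((1 - a) * (2 - a) * x * (1 - x)) := by
    rw [show (a-1) * (a-2) * ((1:ℝ)*x) * ((1:ℝ)*(1-x)) = (1-a)*(2-a)*x*(1-x) by ring,
      show (0:ℝ) - x ^ (2-a) - (1-x) ^ (2-a) + 1 = 1 - (1-x) ^ (2-a) - x ^ (2-a) by ring]
  rwa [hval] at hG
end

section
/- Let a, b₁, b₂, c be complex numbers with Re(c − a − b₂) > 0, with c and c − b₂ not nonpositive integers, and let x be complex with |x| < 1. Then Appell's F₁ double series converges at (x, 1), and F₁(a; b₁, b₂; c; x, 1) = (Γ(c) Γ(c−a−b₂) / (Γ(c−a) Γ(c−b₂))) · ₂F₁(a, b₁; c−b₂; x). -/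
/-- Pochhammer symbol `(z)_k = ∏_{i=0}^{k-1} (z + i)` for a complex number `z`. -/
noncomputable def poch (z : ℂ) (k : ℕ) : ℂ := ∏ i ∈ Finset.range k, (z + i)

/-- Terms of Appell's `F₁` double series. -/
noncomputable def appellF1Term (a b₁ b₂ c x y : ℂ) (p : ℕ × ℕ) : ℂ :=
  poch a (p.1 + p.2) * poch b₁ p.1 * poch b₂ p.2 /
    (poch c (p.1 + p.2) * (Nat.factorial p.1 : ℂ) * (Nat.factorial p.2 : ℂ)) *
    x ^ p.1 * y ^ p.2

/-- Appell's `F₁` double series. -/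
noncomputable def appellF1 (a b₁ b₂ c x y : ℂ) : ℂ :=
  ∑' p : ℕ × ℕ, appellF1Term a b₁ b₂ c x y p

/-- Gauss hypergeometric series `₂F₁(a,b;c;x)`. -/
noncomputable def hyp2F1 (a b c x : ℂ) : ℂ :=
  ∑' k : ℕ, poch a k * poch b k / (poch c k * (Nat.factorial k : ℂ)) * x ^ k

open Filter Complex Finset

noncomputable def Complex.abs : AbsoluteValue ℂ ℝ where
  toFun z := ‖z‖
  map_mul' := norm_mul
  nonneg' := norm_nonneg
  eq_zero' _ := norm_eq_zero
  add_le' := norm_add_le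

namespace Complex

lemma abs_apply' (z : ℂ) : Complex.abs z = ‖z‖ := rfl

lemma norm_eq_abs (z : ℂ) : ‖z‖ = Complex.abs z := rfl

lemma abs_natCast (n : ℕ) : Complex.abs (n : ℂ) = n := by simp [abs_apply']

lemma abs_ofReal (r : ℝ) : Complex.abs (r : ℂ) = |r| := by simp [abs_apply']

lemma abs_cpow_eq_rpow_re_of_pos {x : ℝ} (hx : 0 < x) (y : ℂ) :
    Complex.abs ((x : ℂ) ^ y) = x ^ y.re := norm_cpow_eq_rpow_re_of_pos hx y

lemma continuous_abs : Continuous Complex.abs := continuous_norm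

end Complex

lemma poch_zero (z : ℂ) : poch z 0 = 1 := by simp [poch]

lemma poch_succ (z : ℂ) (n : ℕ) : poch z (n + 1) = poch z n * (z + n) := by
  simp [poch, Finset.prod_range_succ]

lemma poch_succ' (z : ℂ) (n : ℕ) : poch z (n + 1) = z * poch (z + 1) n := by
  induction n with
  | zero => simp [poch_zero, poch_succ]
  | succ n ih => rw [poch_succ, ih, poch_succ]; push_cast; ring

lemma poch_add (z : ℂ) (m n : ℕ) : poch z (m + n) = poch z m * poch (z + m) n := by
  induction n with
  | zero => simp [poch_zero]
  | succ n ih => rw [← add_assoc, poch_succ, ih, poch_succ]; push_cast; ring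

lemma poch_ne_zero {z : ℂ} (hz : ∀ k : ℕ, z ≠ -k) (n : ℕ) : poch z n ≠ 0 := by
  refine Finset.prod_ne_zero_iff.2 fun i _ => ?_
  intro h
  exact hz i (by linear_combination h)

lemma poch_eq_zero {m : ℕ} (n : ℕ) (hn : m < n) : poch (-(m:ℂ)) n = 0 :=
  Finset.prod_eq_zero (Finset.mem_range.2 hn) (by simp)

lemma gammaSeq_eq (z : ℂ) (n : ℕ) :
    Complex.GammaSeq z n = (n : ℂ) ^ z * n.factorial / poch z (n + 1) := rfl

lemma abs_poch_pos {z : ℂ} (hz : ∀ k : ℕ, z ≠ -k) (n : ℕ) :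
    0 < Complex.abs (poch z n) :=
  AbsoluteValue.pos _ (poch_ne_zero hz n)

lemma exists_bound_of_eventually {u : ℕ → ℝ} {N : ℕ} {C : ℝ} (h : ∀ n, N ≤ n → u n ≤ C) :
    ∃ D, ∀ n, u n ≤ D := by
  refine ⟨max C ((Finset.range (N + 1)).sup' ⟨0, by simp⟩ u), fun n => ?_⟩
  rcases le_or_gt N n with hn | hn
  · exact le_max_of_le_left (h n hn)
  · exact le_max_of_le_right (Finset.le_sup' u (Finset.mem_range.2 (by omega)))

lemma exists_pos_lower {u : ℕ → ℝ} (hpos : ∀ n, 0 < u n) {N : ℕ} {ε : ℝ} (hε : 0 < ε)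
    (h : ∀ n, N ≤ n → ε ≤ u n) : ∃ δ, 0 < δ ∧ ∀ n, δ ≤ u n := by
  refine ⟨min ε ((Finset.range (N + 1)).inf' ⟨0, by simp⟩ u), ?_, fun n => ?_⟩
  · exact lt_min hε ((Finset.lt_inf'_iff _).2 fun b _ => hpos b)
  · rcases le_or_gt N n with hn | hn
    · exact le_trans (min_le_left _ _) (h n hn)
    · exact le_trans (min_le_right _ _) (Finset.inf'_le u (Finset.mem_range.2 (by omega)))

lemma rpow_comparable {u v : ℝ} (hu : 0 < u) (huv : u ≤ v) (hvu : v ≤ 3 * u) (s : ℝ) :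
    v ^ s ≤ 3 ^ |s| * u ^ s ∧ u ^ s ≤ 3 ^ |s| * v ^ s := by
  have hv : 0 < v := lt_of_lt_of_le hu huv
  rcases le_or_gt 0 s with hs | hs
  · rw [_root_.abs_of_nonneg hs]
    constructor
    · calc v ^ s ≤ (3 * u) ^ s := Real.rpow_le_rpow hv.le hvu hs
        _ = 3 ^ s * u ^ s := Real.mul_rpow (by norm_num) hu.le
    · calc u ^ s ≤ v ^ s := Real.rpow_le_rpow hu.le huv hs
        _ ≤ 3 ^ s * v ^ s := le_mul_of_one_le_left (Real.rpow_nonneg hv.le s)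
            (Real.one_le_rpow (by norm_num) hs)
  · rw [_root_.abs_of_neg hs]
    have h3 : (1:ℝ) ≤ 3 ^ (-s) := Real.one_le_rpow (by norm_num) (by linarith)
    constructor
    · calc v ^ s ≤ u ^ s := Real.rpow_le_rpow_of_nonpos hu huv hs.le
        _ ≤ 3 ^ (-s) * u ^ s := le_mul_of_one_le_left (Real.rpow_nonneg hu.le s) h3
    · have h13 : v / 3 ≤ u := by linarith
      calc u ^ s ≤ (v / 3) ^ s :=
            Real.rpow_le_rpow_of_nonpos (by positivity) h13 hs.le
        _ = v ^ s / 3 ^ s := Real.div_rpow hv.le (by norm_num : (0:ℝ) ≤ 3) s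
        _ = 3 ^ (-s) * v ^ s := by
            rw [Real.rpow_neg (by norm_num)]; ring

lemma fact_rpow_bound (s : ℝ) (m : ℕ) (hm : 1 ≤ m) :
    3 ^ (-|s|) * (((m+1).factorial : ℝ) * ((m:ℝ)+2) ^ (s-1)) ≤ (m:ℝ) ^ s * m.factorial ∧
    (m:ℝ) ^ s * m.factorial ≤ 2 * 3 ^ |s| * (((m+1).factorial : ℝ) * ((m:ℝ)+2) ^ (s-1)) := by
  have hm1 : (1:ℝ) ≤ (m:ℝ) := by exact_mod_cast hm
  have hmp : (0:ℝ) < m := by linarith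
  have hcomp := rpow_comparable hmp (by linarith : (m:ℝ) ≤ (m:ℝ)+2) (by linarith) s
  have hfact : ((m+1).factorial : ℝ) = ((m:ℝ)+1) * m.factorial := by
    rw [Nat.factorial_succ]; push_cast; ring
  have hsub : ((m:ℝ)+2) ^ (s-1) = ((m:ℝ)+2) ^ s / ((m:ℝ)+2) := by
    rw [Real.rpow_sub (by linarith), Real.rpow_one]
  have hfp : (0:ℝ) < m.factorial := by exact_mod_cast m.factorial_pos
  have h3 : (0:ℝ) < 3 ^ |s| := Real.rpow_pos_of_pos (by norm_num) _
  have h3' : (3:ℝ) ^ (-|s|) = ((3:ℝ) ^ |s|)⁻¹ := Real.rpow_neg (by norm_num) _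
  have hrp : (0:ℝ) < ((m:ℝ)+2) ^ s := Real.rpow_pos_of_pos (by linarith) s
  have hmrp : (0:ℝ) < (m:ℝ) ^ s := Real.rpow_pos_of_pos hmp s
  constructor
  · rw [hfact, hsub, h3']
    rw [inv_mul_le_iff₀ h3]
    -- (m+1) * m! * ((m+2)^s / (m+2)) ≤ 3^|s| * (m^s * m!)
    have key : ((m:ℝ)+2) ^ s ≤ 3 ^ |s| * (m:ℝ) ^ s := hcomp.1
    have hq : ((m:ℝ)+1) / ((m:ℝ)+2) ≤ 1 := by
      rw [div_le_one (by linarith)]; linarith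
    calc ((m:ℝ)+1) * (m.factorial) * (((m:ℝ)+2) ^ s / ((m:ℝ)+2))
        = (((m:ℝ)+1) / ((m:ℝ)+2)) * (((m:ℝ)+2) ^ s * m.factorial) := by ring
      _ ≤ 1 * (((m:ℝ)+2) ^ s * m.factorial) := by
          apply mul_le_mul_of_nonneg_right hq (by positivity)
      _ = ((m:ℝ)+2) ^ s * m.factorial := by ring
      _ ≤ (3 ^ |s| * (m:ℝ) ^ s) * m.factorial := by
          apply mul_le_mul_of_nonneg_right key hfp.le
      _ = 3 ^ |s| * ((m:ℝ) ^ s * m.factorial) := by ring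
  · rw [hfact, hsub]
    have key : (m:ℝ) ^ s ≤ 3 ^ |s| * ((m:ℝ)+2) ^ s := hcomp.2
    have hq : (1:ℝ)/2 ≤ ((m:ℝ)+1) / ((m:ℝ)+2) := by
      rw [div_le_div_iff₀ (by norm_num) (by linarith)]; linarith
    calc (m:ℝ) ^ s * m.factorial ≤ (3 ^ |s| * ((m:ℝ)+2) ^ s) * m.factorial := by
          apply mul_le_mul_of_nonneg_right key hfp.le
      _ = 2 * 3 ^ |s| * ((1/2) * (((m:ℝ)+2) ^ s * m.factorial)) := by ring
      _ ≤ 2 * 3 ^ |s| * ((((m:ℝ)+1) / ((m:ℝ)+2)) * (((m:ℝ)+2) ^ s * m.factorial)) := by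
          apply mul_le_mul_of_nonneg_left
            (mul_le_mul_of_nonneg_right hq (by positivity)) (by positivity)
      _ = 2 * 3 ^ |s| * (((m:ℝ)+1) * m.factorial * (((m:ℝ)+2) ^ s / ((m:ℝ)+2))) := by ring

lemma abs_poch_succ (z : ℂ) (hz : ∀ k : ℕ, z ≠ -k) {n : ℕ} (hn : 1 ≤ n) :
    Complex.abs (poch z (n+1)) * Complex.abs (Complex.GammaSeq z n)
      = (n:ℝ) ^ z.re * n.factorial := by
  have hnp : (0:ℝ) < n := by exact_mod_cast hn
  have h1 : Complex.abs ((n:ℂ) ^ z) = (n:ℝ) ^ z.re := by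
    rw [← Complex.ofReal_natCast]
    exact Complex.abs_cpow_eq_rpow_re_of_pos hnp z
  have h2 : Complex.GammaSeq z n * poch z (n+1) = (n:ℂ) ^ z * n.factorial := by
    rw [gammaSeq_eq, div_mul_cancel₀]
    exact poch_ne_zero hz _
  calc Complex.abs (poch z (n+1)) * Complex.abs (Complex.GammaSeq z n)
      = Complex.abs (Complex.GammaSeq z n * poch z (n+1)) := by rw [map_mul, mul_comm]
    _ = Complex.abs ((n:ℂ) ^ z * (n.factorial:ℂ)) := by rw [h2]
    _ = (n:ℝ) ^ z.re * n.factorial := by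
        rw [map_mul, h1, Complex.abs_natCast]

lemma den_pos (s : ℝ) (n : ℕ) : (0:ℝ) < n.factorial * ((n:ℝ)+1) ^ (s - 1) := by
  have : (0:ℝ) < n.factorial := by exact_mod_cast n.factorial_pos
  positivity

lemma poch_upper (z : ℂ) :
    ∃ C, 0 < C ∧ ∀ n, Complex.abs (poch z n) ≤ C * (n.factorial * ((n:ℝ)+1) ^ (z.re - 1)) := by
  set s := z.re
  set den : ℕ → ℝ := fun n => n.factorial * ((n:ℝ)+1) ^ (s - 1) with hden_def
  have hden : ∀ n, 0 < den n := fun n => den_pos s n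
  set u : ℕ → ℝ := fun n => Complex.abs (poch z n) / den n with hu_def
  suffices h : ∃ D, ∀ n, u n ≤ D by
    obtain ⟨D, hD⟩ := h
    refine ⟨max D 1, lt_of_lt_of_le one_pos (le_max_right _ _), fun n => ?_⟩
    have := hD n
    rw [hu_def, div_le_iff₀ (hden n)] at this
    calc Complex.abs (poch z n) ≤ D * den n := this
      _ ≤ max D 1 * den n := mul_le_mul_of_nonneg_right (le_max_left _ _) (hden n).le
  by_cases hz : ∀ k : ℕ, z ≠ -k
  · -- nondegenerate case
    have hΓ : Complex.Gamma z ≠ 0 := Complex.Gamma_ne_zero hz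
    have hΓpos : 0 < Complex.abs (Complex.Gamma z) := AbsoluteValue.pos _ hΓ
    have htend : Filter.Tendsto (fun n => Complex.abs (Complex.GammaSeq z n))
        atTop (nhds (Complex.abs (Complex.Gamma z))) :=
      Complex.continuous_abs.continuousAt.tendsto.comp (Complex.GammaSeq_tendsto_Gamma z)
    have hev : ∀ᶠ n in atTop, Complex.abs (Complex.Gamma z) / 2
        ≤ Complex.abs (Complex.GammaSeq z n) :=
      htend.eventually (eventually_ge_nhds (by linarith))
    obtain ⟨N, hN⟩ := Filter.eventually_atTop.1 hev
    refine exists_bound_of_eventually (N := max N 1 + 1)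
      (C := 2 * 3 ^ |s| * (2 / Complex.abs (Complex.Gamma z))) (fun m hm => ?_)
    obtain ⟨n, rfl⟩ : ∃ n, m = n + 1 := ⟨m - 1, by omega⟩
    have hn1 : 1 ≤ n := by omega
    have hnN : N ≤ n := by omega
    have hGS := hN n hnN
    have habs := abs_poch_succ z hz hn1
    have hGSpos : 0 < Complex.abs (Complex.GammaSeq z n) := lt_of_lt_of_le (by linarith) hGS
    have hb := (fact_rpow_bound s n hn1).2
    have hden' : den (n+1) = (n+1).factorial * ((n:ℝ)+2) ^ (s-1) := by
      rw [hden_def]; push_cast; ring_nf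
    rw [hu_def, div_le_iff₀ (hden (n+1))]
    have hpoch : Complex.abs (poch z (n+1))
        = (n:ℝ) ^ s * n.factorial / Complex.abs (Complex.GammaSeq z n) := by
      field_simp [← habs]
      exact habs
    rw [hpoch, div_le_iff₀ hGSpos, hden']
    calc (n:ℝ) ^ s * n.factorial
        ≤ 2 * 3 ^ |s| * (((n+1).factorial : ℝ) * ((n:ℝ)+2) ^ (s-1)) := hb
      _ ≤ 2 * 3 ^ |s| * (2 / Complex.abs (Complex.Gamma z))
            * (((n+1).factorial : ℝ) * ((n:ℝ)+2) ^ (s-1))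
            * Complex.abs (Complex.GammaSeq z n) := by
          have h2 : (1:ℝ) ≤ (2 / Complex.abs (Complex.Gamma z))
              * Complex.abs (Complex.GammaSeq z n) := by
            rw [div_mul_eq_mul_div, le_div_iff₀ hΓpos, one_mul]
            linarith
          have hfac : (0:ℝ) < ((n+1).factorial : ℝ) * ((n:ℝ)+2) ^ (s-1) := by
            have : (0:ℝ) < ((n+1).factorial : ℝ) := by exact_mod_cast (n+1).factorial_pos
            positivity
          calc 2 * 3 ^ |s| * (((n+1).factorial : ℝ) * ((n:ℝ)+2) ^ (s-1))
              = 2 * 3 ^ |s| * (((n+1).factorial : ℝ) * ((n:ℝ)+2) ^ (s-1)) * 1 := by ring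
            _ ≤ 2 * 3 ^ |s| * (((n+1).factorial : ℝ) * ((n:ℝ)+2) ^ (s-1))
                * ((2 / Complex.abs (Complex.Gamma z)) * Complex.abs (Complex.GammaSeq z n)) := by
                apply mul_le_mul_of_nonneg_left h2
                positivity
            _ = 2 * 3 ^ |s| * (2 / Complex.abs (Complex.Gamma z))
                * (((n+1).factorial : ℝ) * ((n:ℝ)+2) ^ (s-1))
                * Complex.abs (Complex.GammaSeq z n) := by ring
  · -- degenerate case: z = -k
    push_neg at hz
    obtain ⟨k, hk⟩ := hz
    refine exists_bound_of_eventually (N := k + 1) (C := 0) (fun n hn => ?_)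
    have : poch z n = 0 := by rw [hk]; exact poch_eq_zero n (by omega)
    simp [hu_def, this]

lemma poch_lower (z : ℂ) (hz : ∀ k : ℕ, z ≠ -k) :
    ∃ δ, 0 < δ ∧ ∀ n : ℕ, δ * (n.factorial * ((n:ℝ)+1) ^ (z.re - 1)) ≤ Complex.abs (poch z n) := by
  set s := z.re
  set den : ℕ → ℝ := fun n => n.factorial * ((n:ℝ)+1) ^ (s - 1) with hden_def
  have hden : ∀ n, 0 < den n := fun n => den_pos s n
  set u : ℕ → ℝ := fun n => Complex.abs (poch z n) / den n with hu_def
  suffices h : ∃ δ, 0 < δ ∧ ∀ n, δ ≤ u n by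
    obtain ⟨δ, hδ, h⟩ := h
    refine ⟨δ, hδ, fun n => ?_⟩
    have := h n
    rw [hu_def, le_div_iff₀ (hden n)] at this
    exact this
  have hupos : ∀ n, 0 < u n := fun n => div_pos (abs_poch_pos hz n) (hden n)
  have hΓ : Complex.Gamma z ≠ 0 := Complex.Gamma_ne_zero hz
  have hΓpos : 0 < Complex.abs (Complex.Gamma z) := AbsoluteValue.pos _ hΓ
  have htend : Filter.Tendsto (fun n => Complex.abs (Complex.GammaSeq z n))
      atTop (nhds (Complex.abs (Complex.Gamma z))) :=
    Complex.continuous_abs.continuousAt.tendsto.comp (Complex.GammaSeq_tendsto_Gamma z)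
  have hev : ∀ᶠ n in atTop, Complex.abs (Complex.GammaSeq z n)
      ≤ 2 * Complex.abs (Complex.Gamma z) :=
    htend.eventually (eventually_le_nhds (by linarith))
  obtain ⟨N, hN⟩ := Filter.eventually_atTop.1 hev
  refine exists_pos_lower hupos (N := max N 1 + 1)
    (ε := 3 ^ (-|s|) / (2 * Complex.abs (Complex.Gamma z))) (by positivity) (fun m hm => ?_)
  obtain ⟨n, rfl⟩ : ∃ n, m = n + 1 := ⟨m - 1, by omega⟩
  have hn1 : 1 ≤ n := by omega
  have hGS := hN n (by omega)
  have habs := abs_poch_succ z hz hn1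
  have hGSpos : 0 < Complex.abs (Complex.GammaSeq z n) := by
    have := poch_ne_zero hz (n+1)
    have h0 : Complex.abs (poch z (n+1)) > 0 := abs_poch_pos hz (n+1)
    by_contra hcon
    push_neg at hcon
    have : Complex.abs (Complex.GammaSeq z n) = 0 := le_antisymm hcon (AbsoluteValue.nonneg _ _)
    rw [this, mul_zero] at habs
    have hnp : (0:ℝ) < (n:ℝ) ^ s * n.factorial := by
      have : (0:ℝ) < n.factorial := by exact_mod_cast n.factorial_pos
      have hnp2 : (0:ℝ) < (n:ℝ) := by exact_mod_cast hn1
      positivity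
    linarith
  have hb := (fact_rpow_bound s n hn1).1
  have hden' : den (n+1) = (n+1).factorial * ((n:ℝ)+2) ^ (s-1) := by
    rw [hden_def]; push_cast; ring_nf
  rw [hu_def, le_div_iff₀ (hden (n+1)), hden']
  have hpoch : Complex.abs (poch z (n+1))
      = (n:ℝ) ^ s * n.factorial / Complex.abs (Complex.GammaSeq z n) := by
    field_simp [← habs]
    exact habs
  rw [hpoch, le_div_iff₀ hGSpos]
  calc 3 ^ (-|s|) / (2 * Complex.abs (Complex.Gamma z))
        * (((n+1).factorial : ℝ) * ((n:ℝ)+2) ^ (s-1)) * Complex.abs (Complex.GammaSeq z n)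
      ≤ 3 ^ (-|s|) / (2 * Complex.abs (Complex.Gamma z))
        * (((n+1).factorial : ℝ) * ((n:ℝ)+2) ^ (s-1)) * (2 * Complex.abs (Complex.Gamma z)) := by
        apply mul_le_mul_of_nonneg_left hGS
        have : (0:ℝ) < ((n+1).factorial : ℝ) := by exact_mod_cast (n+1).factorial_pos
        positivity
    _ = 3 ^ (-|s|) * (((n+1).factorial : ℝ) * ((n:ℝ)+2) ^ (s-1)) := by
        field_simp
    _ ≤ (n:ℝ) ^ s * n.factorial := hb

lemma summable_rpow_shift {t : ℝ} (ht : t < -1) :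
    Summable (fun j : ℕ => ((j:ℝ)+1) ^ t) := by
  have h := Real.summable_nat_rpow.2 ht
  have h2 : Summable (fun j : ℕ => ((j+1:ℕ):ℝ) ^ t) :=
    (summable_nat_add_iff 1).2 h
  refine h2.congr fun j => by push_cast; ring_nf

lemma summable_rpow_geom {s r : ℝ} (hr0 : 0 ≤ r) (hr : r < 1) :
    Summable (fun i : ℕ => ((i:ℝ)+1) ^ s * r ^ i) := by
  rcases eq_or_lt_of_le hr0 with h0 | h0
  · apply summable_of_ne_finset_zero (s := {0})
    intro i hi
    have : i ≠ 0 := by simpa using hi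
    simp [← h0, zero_pow this]
  set k := ⌈max s 0⌉₊ with hk
  have hsk : s ≤ (k:ℝ) := le_trans (le_max_left _ _) (Nat.le_ceil _)
  have hg : Summable (fun i : ℕ => ((i:ℝ)) ^ k * r ^ i) := by
    have := summable_pow_mul_geometric_of_norm_lt_one (R := ℝ) k (r := r)
      (by rwa [Real.norm_eq_abs, abs_of_pos h0])
    exact this
  have hg1 : Summable (fun i : ℕ => (((i+1:ℕ)):ℝ) ^ k * r ^ (i+1) * r⁻¹) :=
    (((summable_nat_add_iff 1).2 hg)).mul_right r⁻¹
  have hg2 : Summable (fun i : ℕ => ((i:ℝ)+1) ^ k * r ^ i) := by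
    refine hg1.congr fun i => ?_
    push_cast
    rw [pow_succ]
    field_simp
  refine hg2.of_nonneg_of_le (fun i => by positivity) (fun i => ?_)
  have h1 : ((i:ℝ)+1) ^ s ≤ ((i:ℝ)+1) ^ (k:ℝ) :=
    Real.rpow_le_rpow_of_exponent_le (by push_cast; linarith [Nat.cast_nonneg (α := ℝ) i]) hsk
  rw [Real.rpow_natCast] at h1
  exact mul_le_mul_of_nonneg_right h1 (by positivity)

lemma term_bound (α β γ' : ℂ) (hγ : ∀ k : ℕ, γ' ≠ -k) :
    ∃ K, 0 < K ∧ ∀ j : ℕ, Complex.abs (poch α j * poch β j / (poch γ' j * (j.factorial:ℂ)))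
      ≤ K * ((j:ℝ)+1) ^ (α.re + β.re - γ'.re - 1) := by
  obtain ⟨Ca, hCa, hA⟩ := poch_upper α
  obtain ⟨Cb, hCb, hB⟩ := poch_upper β
  obtain ⟨δ, hδ, hD⟩ := poch_lower γ' hγ
  refine ⟨Ca * Cb / δ, by positivity, fun j => ?_⟩
  have hF : (0:ℝ) < j.factorial := by exact_mod_cast j.factorial_pos
  set F : ℝ := (j.factorial : ℝ)
  set P1 : ℝ := ((j:ℝ)+1) ^ (α.re - 1)
  set P2 : ℝ := ((j:ℝ)+1) ^ (β.re - 1)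
  set P3 : ℝ := ((j:ℝ)+1) ^ (γ'.re - 1)
  set P : ℝ := ((j:ℝ)+1) ^ (α.re + β.re - γ'.re - 1)
  have hP1 : 0 < P1 := Real.rpow_pos_of_pos (by positivity) _
  have hP2 : 0 < P2 := Real.rpow_pos_of_pos (by positivity) _
  have hP3 : 0 < P3 := Real.rpow_pos_of_pos (by positivity) _
  have hP : 0 < P := Real.rpow_pos_of_pos (by positivity) _
  have hPP : P1 * P2 = P * P3 := by
    rw [← Real.rpow_add (by positivity), ← Real.rpow_add (by positivity)]
    ring_nf
  have habs : Complex.abs (poch α j * poch β j / (poch γ' j * (j.factorial:ℂ)))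
      = Complex.abs (poch α j) * Complex.abs (poch β j)
        / (Complex.abs (poch γ' j) * F) := by
    rw [map_div₀, map_mul, map_mul, Complex.abs_natCast]
  rw [habs]
  have hnum : Complex.abs (poch α j) * Complex.abs (poch β j)
      ≤ (Ca * (F * P1)) * (Cb * (F * P2)) :=
    mul_le_mul (hA j) (hB j) (AbsoluteValue.nonneg _ _) (by positivity)
  have hdenom : δ * (F * P3) * F ≤ Complex.abs (poch γ' j) * F :=
    mul_le_mul_of_nonneg_right (hD j) hF.le
  calc Complex.abs (poch α j) * Complex.abs (poch β j)
        / (Complex.abs (poch γ' j) * F)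
      ≤ (Ca * (F * P1)) * (Cb * (F * P2)) / (δ * (F * P3) * F) := by
        apply div_le_div₀ (by positivity) hnum (by positivity) hdenom
    _ = Ca * Cb / δ * P := by
        field_simp
        linear_combination hPP

/-- Terms of the Gauss hypergeometric series at 1. -/
noncomputable def gaussTerm (α β γ' : ℂ) (j : ℕ) : ℂ :=
  poch α j * poch β j / (poch γ' j * (j.factorial : ℂ))

lemma re_sub_pos_lemma {γ' α β : ℂ} (hre : 0 < (γ'-α-β).re) :
    α.re + β.re - γ'.re - 1 < -1 := by
  simp only [Complex.sub_re] at hre ⊢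
  linarith

lemma gauss_summable (α β γ' : ℂ) (hγ : ∀ k : ℕ, γ' ≠ -k) (hre : 0 < (γ'-α-β).re) :
    Summable (gaussTerm α β γ') := by
  obtain ⟨K, hK, hT⟩ := term_bound α β γ' hγ
  refine Summable.of_norm_bounded
    ((summable_rpow_shift (re_sub_pos_lemma hre)).mul_left K) (fun j => ?_)
  rw [Complex.norm_eq_abs]
  exact hT j

lemma gauss_term_mul_tendsto (α β γ' : ℂ) (hγ : ∀ k : ℕ, γ' ≠ -k)
    (hre : 0 < (γ'-α-β).re) :
    Filter.Tendsto (fun N : ℕ => (N:ℂ) * gaussTerm α β γ' N) atTop (nhds 0) := by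
  obtain ⟨K, hK, hT⟩ := term_bound α β γ' hγ
  set t : ℝ := α.re + β.re - γ'.re - 1
  have ht : t + 1 < 0 := by simp only [t]; linarith [re_sub_pos_lemma hre]
  apply squeeze_zero_norm (a := fun N : ℕ => K * ((N:ℝ)+1) ^ (t+1))
  · intro N
    rw [norm_mul, Complex.norm_natCast, Complex.norm_eq_abs]
    have h1 : (N:ℝ) * Complex.abs (gaussTerm α β γ' N)
        ≤ ((N:ℝ)+1) * (K * ((N:ℝ)+1) ^ t) := by
      apply mul_le_mul (by linarith [Nat.cast_nonneg (α := ℝ) N]) (hT N)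
        (AbsoluteValue.nonneg _ _) (by positivity)
    calc (N:ℝ) * Complex.abs (gaussTerm α β γ' N)
        ≤ ((N:ℝ)+1) * (K * ((N:ℝ)+1) ^ t) := h1
      _ = K * ((N:ℝ)+1) ^ (t+1) := by
          rw [Real.rpow_add_one (by positivity)]; ring
  · have h2 : Filter.Tendsto (fun N : ℕ => ((N:ℝ)+1) ^ (t+1)) atTop (nhds 0) := by
      have h3 : Filter.Tendsto (fun x : ℝ => x ^ (-(-(t+1)))) atTop (nhds 0) :=
        tendsto_rpow_neg_atTop (by linarith)
      simp only [neg_neg] at h3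
      exact h3.comp (tendsto_atTop_add_const_right atTop 1 tendsto_natCast_atTop_atTop)
    simpa using h2.const_mul K

lemma gauss_contiguous (α β γ' : ℂ) (hγ : ∀ k : ℕ, γ' ≠ -k) (hre : 0 < (γ'-α-β).re) :
    γ' * (γ'-α-β) * ∑' j, gaussTerm α β γ' j
      = (γ'-α) * (γ'-β) * ∑' j, gaussTerm α β (γ'+1) j := by
  have hγ1 : ∀ k : ℕ, γ' + 1 ≠ -k := by
    intro k h
    exact hγ (k+1) (by push_cast; linear_combination h)
  have hre1 : 0 < (γ'+1-α-β).re := by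
    have h : γ'+1-α-β = (γ'-α-β)+1 := by ring
    rw [h, Complex.add_re, Complex.one_re]
    linarith
  have hS : Summable (gaussTerm α β γ') := gauss_summable α β γ' hγ hre
  have hS1 : Summable (gaussTerm α β (γ'+1)) := gauss_summable α β (γ'+1) hγ1 hre1
  set W : ℕ → ℂ := fun j => γ' * j * gaussTerm α β γ' j with hW
  have hγ0 : γ' ≠ 0 := by
    intro h; exact hγ 0 (by simp [h])
  have key : ∀ j : ℕ, γ' * (γ'-α-β) * gaussTerm α β γ' j
      - (γ'-α) * (γ'-β) * gaussTerm α β (γ'+1) j = W j - W (j+1) := by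
    intro j
    have hγj : γ' + j ≠ 0 := by
      intro h; exact hγ j (by linear_combination h)
    have hR : poch γ' j ≠ 0 := poch_ne_zero hγ j
    have hfac : ((j.factorial : ℕ) : ℂ) ≠ 0 := by
      exact_mod_cast j.factorial_ne_zero
    have hj1 : ((j:ℂ)+1) ≠ 0 := by
      intro h
      have := congrArg Complex.re h
      simp [Complex.add_re] at this
      linarith [Nat.cast_nonneg (α := ℝ) j]
    have hpq : poch (γ'+1) j = poch γ' j * (γ' + j) / γ' := by
      rw [eq_div_iff hγ0, mul_comm _ γ', ← poch_succ', poch_succ]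
    have hfac1 : (((j+1).factorial : ℕ) : ℂ) = ((j:ℂ)+1) * j.factorial := by
      rw [Nat.factorial_succ]; push_cast; ring
    simp only [hW, gaussTerm, poch_succ, hpq, hfac1]
    push_cast
    field_simp
    ring
  -- telescoping
  have htel : Filter.Tendsto (fun N => ∑ j ∈ Finset.range N, (W j - W (j+1)))
      atTop (nhds 0) := by
    have hW0 : W 0 = 0 := by simp [hW]
    have hWlim : Filter.Tendsto W atTop (nhds 0) := by
      have := (gauss_term_mul_tendsto α β γ' hγ hre).const_mul γ'
      simp only [mul_zero] at this
      refine this.congr fun N => by rw [hW]; ring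
    have heq : ∀ N, ∑ j ∈ Finset.range N, (W j - W (j+1)) = W 0 - W N :=
      fun N => Finset.sum_range_sub' W N
    rw [show (0:ℂ) = W 0 - 0 by rw [hW0]; ring]
    exact (Filter.Tendsto.const_sub (W 0) hWlim).congr fun N => (heq N).symm
  have hd : Summable (fun j => γ' * (γ'-α-β) * gaussTerm α β γ' j
      - (γ'-α) * (γ'-β) * gaussTerm α β (γ'+1) j) :=
    (hS.mul_left _).sub (hS1.mul_left _)
  have hsum0 : ∑' j, (γ' * (γ'-α-β) * gaussTerm α β γ' j
      - (γ'-α) * (γ'-β) * gaussTerm α β (γ'+1) j) = 0 := by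
    have h1 := hd.hasSum.tendsto_sum_nat
    have h2 : Filter.Tendsto (fun N => ∑ j ∈ Finset.range N,
        (γ' * (γ'-α-β) * gaussTerm α β γ' j - (γ'-α) * (γ'-β) * gaussTerm α β (γ'+1) j))
        atTop (nhds 0) :=
      htel.congr fun N => Finset.sum_congr rfl fun j _ => (key j).symm
    exact tendsto_nhds_unique h1 h2
  rw [Summable.tsum_sub (hS.mul_left _) (hS1.mul_left _), tsum_mul_left, tsum_mul_left] at hsum0
  exact sub_eq_zero.1 hsum0

lemma shift_ne {γ : ℂ} (hγ : ∀ k : ℕ, γ ≠ -k) (n : ℕ) : ∀ k : ℕ, γ + n ≠ -k := by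
  intro k h
  exact hγ (k+n) (by push_cast; linear_combination h)

lemma shift_re {γ α β : ℂ} (hre : 0 < (γ-α-β).re) (n : ℕ) : 0 < (γ+n-α-β).re := by
  have h : γ+n-α-β = (γ-α-β)+n := by ring
  rw [h, Complex.add_re, Complex.natCast_re]
  have : (0:ℝ) ≤ n := Nat.cast_nonneg n
  linarith

lemma gauss_iterate (α β γ : ℂ) (hγ : ∀ k : ℕ, γ ≠ -k) (hre : 0 < (γ-α-β).re) (n : ℕ) :
    poch γ n * poch (γ-α-β) n * ∑' j, gaussTerm α β γ j
      = poch (γ-α) n * poch (γ-β) n * ∑' j, gaussTerm α β (γ+n) j := by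
  induction n with
  | zero => simp [poch_zero]
  | succ n ih =>
    have hcont := gauss_contiguous α β (γ+n) (shift_ne hγ n) (shift_re hre n)
    have hcast : γ + ((n+1:ℕ):ℂ) = (γ+n)+1 := by push_cast; ring
    rw [hcast, poch_succ, poch_succ, poch_succ, poch_succ]
    linear_combination ((γ+(n:ℂ)) * ((γ-α-β)+(n:ℂ))) * ih
      + (poch (γ-α) n * poch (γ-β) n) * hcont

lemma abs_poch_real (M : ℝ) (hM : 0 ≤ M) (j : ℕ) :
    Complex.abs (poch (M:ℂ) j) = ∏ k ∈ Finset.range j, (M + k) := by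
  rw [poch, map_prod]
  refine Finset.prod_congr rfl fun k _ => ?_
  rw [show (M:ℂ) + (k:ℕ) = ((M + k : ℝ):ℂ) by push_cast; ring]
  rw [Complex.abs_ofReal, _root_.abs_of_nonneg (by positivity)]

lemma abs_poch_ge (γ : ℂ) (n j : ℕ) (c : ℝ) (hc : 0 ≤ c)
    (h : c + Complex.abs γ ≤ n) :
    ∏ k ∈ Finset.range j, (c + k) ≤ Complex.abs (poch (γ + n) j) := by
  rw [poch, map_prod]
  refine Finset.prod_le_prod (fun k _ => by positivity) (fun k _ => ?_)
  have htri : Complex.abs (((n:ℂ) + k)) ≤ Complex.abs (γ + n + k) + Complex.abs γ := by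
    calc Complex.abs ((n:ℂ) + k) = Complex.abs ((γ + n + k) + (-γ)) := by ring_nf
      _ ≤ Complex.abs (γ + n + k) + Complex.abs (-γ) := Complex.abs.add_le _ _
      _ = Complex.abs (γ + n + k) + Complex.abs γ := by rw [AbsoluteValue.map_neg]
  have hnk : Complex.abs ((n:ℂ) + k) = (n:ℝ) + k := by
    rw [show (n:ℂ) + (k:ℕ) = (((n:ℝ) + k : ℝ):ℂ) by push_cast; ring]
    rw [Complex.abs_ofReal, _root_.abs_of_nonneg (by positivity)]
  rw [hnk] at htri
  have : γ + (n:ℂ) + k = γ + n + k := by ring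
  have hk : (0:ℝ) ≤ k := Nat.cast_nonneg k
  linarith

lemma prod_add_ge (c : ℝ) (hc : 1 ≤ c) {j : ℕ} (hj : 1 ≤ j) :
    c ≤ ∏ k ∈ Finset.range j, (c + k) := by
  induction j with
  | zero => omega
  | succ m ih =>
    rcases Nat.eq_zero_or_pos m with h0 | h1
    · subst h0; simp
    · rw [Finset.prod_range_succ]
      have h2 := ih h1
      have hm : (1:ℝ) ≤ c + m := by
        have : (0:ℝ) ≤ m := Nat.cast_nonneg m
        linarith
      calc c ≤ ∏ k ∈ Finset.range m, (c+k) := h2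
        _ ≤ (∏ k ∈ Finset.range m, (c+k)) * (c + m) :=
            le_mul_of_one_le_right (by linarith) hm

lemma gauss_tail (α β γ : ℂ) :
    Filter.Tendsto (fun n : ℕ => ∑' j, gaussTerm α β (γ + n) j) atTop (nhds 1) := by
  set M : ℝ := max 1 (α.re + β.re + 2) with hM
  have hM1 : (1:ℝ) ≤ M := le_max_left _ _
  have hM2 : α.re + β.re + 2 ≤ M := le_max_right _ _
  have hMc : ∀ k : ℕ, (M:ℂ) ≠ -k := by
    intro k h
    have := congrArg Complex.re h
    simp only [Complex.ofReal_re, Complex.neg_re, Complex.natCast_re] at this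
    have : (0:ℝ) ≤ k := Nat.cast_nonneg k
    linarith
  obtain ⟨K, hK, hT⟩ := term_bound α β (M:ℂ) hMc
  have hMre : (M:ℂ).re = M := Complex.ofReal_re M
  set t : ℝ := α.re + β.re - M - 1 with hts
  have ht : t < -1 := by simp only [hts]; linarith
  set g : ℕ → ℂ := fun j => if j = 0 then 1 else 0 with hg
  have hg_tsum : ∑' j, g j = 1 := tsum_ite_eq 0 (fun _ => (1:ℂ))
  rw [← hg_tsum]
  apply tendsto_tsum_of_dominated_convergence
    (bound := fun j : ℕ => K * ((j:ℝ)+1) ^ t)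
    ((summable_rpow_shift ht).mul_left K)
  · -- pointwise limits
    intro j
    rcases Nat.eq_zero_or_pos j with hj | hj
    · subst hj
      have : ∀ n : ℕ, gaussTerm α β (γ + n) 0 = 1 := by
        intro n; simp [gaussTerm, poch_zero]
      simp only [this, hg, if_pos rfl]
      exact tendsto_const_nhds
    · have hg0 : g j = 0 := by simp [hg, Nat.pos_iff_ne_zero.1 hj]
      rw [hg0]
      set A : ℝ := Complex.abs (poch α j) * Complex.abs (poch β j) / j.factorial with hA
      have hA0 : 0 ≤ A := by
        have : (0:ℝ) < j.factorial := by exact_mod_cast j.factorial_pos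
        positivity
      apply squeeze_zero_norm' (a := fun n : ℕ => A * ((n:ℝ) - Complex.abs γ)⁻¹)
      · rw [Filter.eventually_atTop]
        refine ⟨⌈Complex.abs γ + 1⌉₊, fun n hn => ?_⟩
        have hn' : Complex.abs γ + 1 ≤ n :=
          le_trans (Nat.le_ceil _) (by exact_mod_cast hn)
        set c : ℝ := (n:ℝ) - Complex.abs γ with hc
        have hc1 : 1 ≤ c := by simp only [hc]; linarith
        have hge := abs_poch_ge γ n j c (by linarith) (by simp only [hc]; linarith)
        have hsingle : c ≤ ∏ k ∈ Finset.range j, (c + k) := prod_add_ge c hc1 hj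
        have hpoch : c ≤ Complex.abs (poch (γ + n) j) := le_trans hsingle hge
        have hcpos : 0 < c := by linarith
        have hfj : (0:ℝ) < j.factorial := by exact_mod_cast j.factorial_pos
        rw [Complex.norm_eq_abs, gaussTerm, map_div₀, map_mul, map_mul, Complex.abs_natCast]
        calc Complex.abs (poch α j) * Complex.abs (poch β j)
              / (Complex.abs (poch (γ+n) j) * j.factorial)
            ≤ Complex.abs (poch α j) * Complex.abs (poch β j) / (c * j.factorial) := by
              have hnum : (0:ℝ) ≤ Complex.abs (poch α j) * Complex.abs (poch β j) := by positivity
              have hden : (0:ℝ) < c * j.factorial := by positivity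
              exact div_le_div_of_nonneg_left hnum hden
                (mul_le_mul_of_nonneg_right hpoch hfj.le)
          _ = A * c⁻¹ := by rw [hA, div_mul_eq_div_div_swap, div_eq_mul_inv]
      · have h1 : Filter.Tendsto (fun n : ℕ => (n:ℝ) - Complex.abs γ) atTop atTop :=
          tendsto_atTop_add_const_right atTop _ tendsto_natCast_atTop_atTop
        simpa using (h1.inv_tendsto_atTop).const_mul A
  · -- uniform bound
    rw [Filter.eventually_atTop]
    refine ⟨⌈M + Complex.abs γ⌉₊, fun n hn => ?_⟩
    intro j
    have hn' : M + Complex.abs γ ≤ n := le_trans (Nat.le_ceil _) (by exact_mod_cast hn)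
    have hge := abs_poch_ge γ n j M (by linarith) hn'
    rw [← abs_poch_real M (by linarith) j] at hge
    have hfj : (0:ℝ) < j.factorial := by exact_mod_cast j.factorial_pos
    have hMj : 0 < Complex.abs (poch (M:ℂ) j) := abs_poch_pos hMc j
    rw [Complex.norm_eq_abs, gaussTerm, map_div₀, map_mul, map_mul, Complex.abs_natCast]
    calc Complex.abs (poch α j) * Complex.abs (poch β j)
          / (Complex.abs (poch (γ+n) j) * j.factorial)
        ≤ Complex.abs (poch α j) * Complex.abs (poch β j)
          / (Complex.abs (poch (M:ℂ) j) * j.factorial) := by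
          have hnum : (0:ℝ) ≤ Complex.abs (poch α j) * Complex.abs (poch β j) := by positivity
          have hden : (0:ℝ) < Complex.abs (poch (M:ℂ) j) * j.factorial := by positivity
          exact div_le_div_of_nonneg_left hnum hden
            (mul_le_mul_of_nonneg_right hge hfj.le)
      _ = Complex.abs (poch α j * poch β j / (poch (M:ℂ) j * (j.factorial:ℂ))) := by
          rw [map_div₀, map_mul, map_mul, Complex.abs_natCast]
      _ ≤ K * ((j:ℝ)+1) ^ (α.re + β.re - (M:ℂ).re - 1) := hT j
      _ = K * ((j:ℝ)+1) ^ t := by rw [hMre]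

lemma ne_neg_nat_of_re_pos {z : ℂ} (hz : 0 < z.re) : ∀ k : ℕ, z ≠ -k := by
  intro k h
  have := congrArg Complex.re h
  simp only [Complex.neg_re, Complex.natCast_re] at this
  have hk : (0:ℝ) ≤ k := Nat.cast_nonneg k
  linarith

lemma gauss_prod_tendsto (α β γ : ℂ) (hγ : ∀ k : ℕ, γ ≠ -k) (hγβ : ∀ k : ℕ, γ - β ≠ -k)
    (hre : 0 < (γ-α-β).re) :
    Filter.Tendsto
      (fun n : ℕ => poch (γ-α) n * poch (γ-β) n / (poch γ n * poch (γ-α-β) n)) atTop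
      (nhds (Complex.Gamma γ * Complex.Gamma (γ-α-β)
        / (Complex.Gamma (γ-α) * Complex.Gamma (γ-β)))) := by
  have hD : ∀ k : ℕ, γ-α-β ≠ -k := ne_neg_nat_of_re_pos hre
  by_cases hA : ∀ k : ℕ, γ - α ≠ -k
  · -- nondegenerate case
    have hL := ((Complex.GammaSeq_tendsto_Gamma γ).mul
        (Complex.GammaSeq_tendsto_Gamma (γ-α-β))).div
      ((Complex.GammaSeq_tendsto_Gamma (γ-α)).mul (Complex.GammaSeq_tendsto_Gamma (γ-β)))
      (mul_ne_zero (Complex.Gamma_ne_zero hA) (Complex.Gamma_ne_zero hγβ))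
    rw [← tendsto_add_atTop_iff_nat 1]
    refine Filter.Tendsto.congr' ?_ hL
    rw [Filter.EventuallyEq, Filter.eventually_atTop]
    refine ⟨1, fun n hn => ?_⟩
    have hn0 : (n:ℂ) ≠ 0 := by
      exact_mod_cast Nat.cast_ne_zero.2 (by omega)
    have hpow : (n:ℂ)^γ * (n:ℂ)^(γ-α-β) = (n:ℂ)^(γ-α) * (n:ℂ)^(γ-β) := by
      rw [← Complex.cpow_add _ _ hn0, ← Complex.cpow_add _ _ hn0]
      congr 1
      ring
    have hfac : ((n.factorial : ℕ):ℂ) ≠ 0 := by exact_mod_cast n.factorial_ne_zero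
    have hpA : poch (γ-α) (n+1) ≠ 0 := poch_ne_zero hA _
    have hpB : poch (γ-β) (n+1) ≠ 0 := poch_ne_zero hγβ _
    have hpγ : poch γ (n+1) ≠ 0 := poch_ne_zero hγ _
    have hpD : poch (γ-α-β) (n+1) ≠ 0 := poch_ne_zero hD _
    have hcA : (n:ℂ)^(γ-α) ≠ 0 := by
      intro h; exact hn0 ((Complex.cpow_eq_zero_iff _ _).1 h).1
    have hcB : (n:ℂ)^(γ-β) ≠ 0 := by
      intro h; exact hn0 ((Complex.cpow_eq_zero_iff _ _).1 h).1
    simp only [gammaSeq_eq, Pi.div_apply]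
    field_simp
    linear_combination hpow
  · push_neg at hA
    obtain ⟨m, hm⟩ := hA
    have hΓA : Complex.Gamma (γ-α) = 0 := by
      rw [hm]; exact Complex.Gamma_neg_nat_eq_zero m
    rw [hΓA, zero_mul, div_zero]
    refine Filter.Tendsto.congr' ?_ (tendsto_const_nhds (x := (0:ℂ)))
    rw [Filter.EventuallyEq, Filter.eventually_atTop]
    refine ⟨m+1, fun n hn => ?_⟩
    rw [hm, poch_eq_zero n (by omega), zero_mul, zero_div]

theorem gauss_sum (α β γ : ℂ) (hγ : ∀ k : ℕ, γ ≠ -k) (hγβ : ∀ k : ℕ, γ - β ≠ -k)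
    (hre : 0 < (γ-α-β).re) :
    ∑' j, gaussTerm α β γ j
      = Complex.Gamma γ * Complex.Gamma (γ-α-β)
        / (Complex.Gamma (γ-α) * Complex.Gamma (γ-β)) := by
  have hD : ∀ k : ℕ, γ-α-β ≠ -k := ne_neg_nat_of_re_pos hre
  set S : ℂ := ∑' j, gaussTerm α β γ j with hS
  have hQ : ∀ n : ℕ,
      S = poch (γ-α) n * poch (γ-β) n / (poch γ n * poch (γ-α-β) n)
        * ∑' j, gaussTerm α β (γ+n) j := by
    intro n
    have hiter := gauss_iterate α β γ hγ hre n
    have hne : poch γ n * poch (γ-α-β) n ≠ 0 :=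
      mul_ne_zero (poch_ne_zero hγ n) (poch_ne_zero hD n)
    rw [div_mul_eq_mul_div, ← hiter, mul_comm (poch γ n * poch (γ-α-β) n) S,
      mul_div_assoc, div_self hne, mul_one]
  have h1 : Filter.Tendsto (fun n : ℕ =>
      poch (γ-α) n * poch (γ-β) n / (poch γ n * poch (γ-α-β) n)
        * ∑' j, gaussTerm α β (γ+n) j) atTop
      (nhds (Complex.Gamma γ * Complex.Gamma (γ-α-β)
        / (Complex.Gamma (γ-α) * Complex.Gamma (γ-β)) * 1)) :=
    (gauss_prod_tendsto α β γ hγ hγβ hre).mul (gauss_tail α β γ)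
  have h2 : Filter.Tendsto (fun _ : ℕ => S) atTop (nhds S) := tendsto_const_nhds
  have := tendsto_nhds_unique (h2.congr fun n => hQ n) h1
  rw [this, mul_one]

lemma rpow_sum_bound (σ : ℝ) (i j : ℕ) :
    ((i:ℝ)+(j:ℝ)+1) ^ σ ≤ ((i:ℝ)+1) ^ |σ| * ((j:ℝ)+1) ^ σ := by
  have hi : (0:ℝ) ≤ i := Nat.cast_nonneg i
  have hj : (0:ℝ) ≤ j := Nat.cast_nonneg j
  rcases le_or_gt 0 σ with hσ | hσ
  · rw [_root_.abs_of_nonneg hσ]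
    calc ((i:ℝ)+(j:ℝ)+1) ^ σ ≤ (((i:ℝ)+1) * ((j:ℝ)+1)) ^ σ :=
          Real.rpow_le_rpow (by linarith) (by nlinarith) hσ
      _ = ((i:ℝ)+1) ^ σ * ((j:ℝ)+1) ^ σ := Real.mul_rpow (by linarith) (by linarith)
  · have h1 : ((i:ℝ)+(j:ℝ)+1) ^ σ ≤ ((j:ℝ)+1) ^ σ :=
      Real.rpow_le_rpow_of_nonpos (by linarith) (by linarith) hσ.le
    have h2 : (1:ℝ) ≤ ((i:ℝ)+1) ^ |σ| :=
      Real.one_le_rpow (by linarith) (abs_nonneg σ)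
    calc ((i:ℝ)+(j:ℝ)+1) ^ σ ≤ ((j:ℝ)+1) ^ σ := h1
      _ ≤ ((i:ℝ)+1) ^ |σ| * ((j:ℝ)+1) ^ σ :=
          le_mul_of_one_le_left (by positivity) h2

lemma appell_term_bound (a b₁ b₂ c x : ℂ) (hc : ∀ k : ℕ, c ≠ -k) :
    ∃ K, 0 < K ∧ ∀ p : ℕ × ℕ,
      Complex.abs (appellF1Term a b₁ b₂ c x 1 p) ≤
        (K * (((p.1:ℝ)+1) ^ (|a.re - c.re| + b₁.re - 1) * Complex.abs x ^ p.1))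
          * ((p.2:ℝ)+1) ^ (a.re - c.re + b₂.re - 1) := by
  obtain ⟨Ca, hCa, hA⟩ := poch_upper a
  obtain ⟨Cb1, hCb1, hB1⟩ := poch_upper b₁
  obtain ⟨Cb2, hCb2, hB2⟩ := poch_upper b₂
  obtain ⟨δ, hδ, hD⟩ := poch_lower c hc
  refine ⟨Ca * Cb1 * Cb2 / δ, by positivity, fun ⟨i, j⟩ => ?_⟩
  set K := Ca * Cb1 * Cb2 / δ with hK
  set σ := a.re - c.re with hσ
  set N := i + j with hN
  have hi : (0:ℝ) ≤ i := Nat.cast_nonneg i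
  have hj : (0:ℝ) ≤ j := Nat.cast_nonneg j
  have hFN : (0:ℝ) < N.factorial := by exact_mod_cast N.factorial_pos
  have hFi : (0:ℝ) < i.factorial := by exact_mod_cast i.factorial_pos
  have hFj : (0:ℝ) < j.factorial := by exact_mod_cast j.factorial_pos
  have hNc : ((N:ℝ)+1) = (i:ℝ)+(j:ℝ)+1 := by rw [hN]; push_cast; ring
  set PN : ℝ := ((N:ℝ)+1) ^ (a.re - 1)
  set PN' : ℝ := ((N:ℝ)+1) ^ (c.re - 1)
  set Pi' : ℝ := ((i:ℝ)+1) ^ (b₁.re - 1)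
  set Pj : ℝ := ((j:ℝ)+1) ^ (b₂.re - 1)
  have hPN : 0 < PN := Real.rpow_pos_of_pos (by positivity) _
  have hPN' : 0 < PN' := Real.rpow_pos_of_pos (by positivity) _
  have hPi : 0 < Pi' := Real.rpow_pos_of_pos (by positivity) _
  have hPj : 0 < Pj := Real.rpow_pos_of_pos (by positivity) _
  have habs : Complex.abs (appellF1Term a b₁ b₂ c x 1 (i, j))
      = Complex.abs (poch a N) * Complex.abs (poch b₁ i) * Complex.abs (poch b₂ j)
        / (Complex.abs (poch c N) * i.factorial * j.factorial) * Complex.abs x ^ i := by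
    simp only [appellF1Term, one_pow, mul_one, map_mul, map_div₀, map_pow,
      Complex.abs_natCast]
    rfl
  rw [habs]
  have hxpow : (0:ℝ) ≤ Complex.abs x ^ i := by positivity
  have step1 : Complex.abs (poch a N) * Complex.abs (poch b₁ i) * Complex.abs (poch b₂ j)
      / (Complex.abs (poch c N) * i.factorial * j.factorial)
      ≤ K * (((N:ℝ)+1) ^ σ * (Pi' * Pj)) := by
    have hnum : Complex.abs (poch a N) * Complex.abs (poch b₁ i) * Complex.abs (poch b₂ j)
        ≤ (Ca * (N.factorial * PN)) * (Cb1 * (i.factorial * Pi'))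
          * (Cb2 * (j.factorial * Pj)) := by
      apply mul_le_mul (mul_le_mul (hA N) (hB1 i) (AbsoluteValue.nonneg _ _) (by positivity))
        (hB2 j) (AbsoluteValue.nonneg _ _) (by positivity)
    have hden : δ * (N.factorial * PN') * i.factorial * j.factorial
        ≤ Complex.abs (poch c N) * i.factorial * j.factorial := by
      apply mul_le_mul_of_nonneg_right (mul_le_mul_of_nonneg_right (hD N) hFi.le) hFj.le
    calc Complex.abs (poch a N) * Complex.abs (poch b₁ i) * Complex.abs (poch b₂ j)
        / (Complex.abs (poch c N) * i.factorial * j.factorial)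
        ≤ (Ca * (N.factorial * PN)) * (Cb1 * (i.factorial * Pi'))
            * (Cb2 * (j.factorial * Pj))
          / (δ * (N.factorial * PN') * i.factorial * j.factorial) := by
          apply div_le_div₀ (by positivity) hnum (by positivity) hden
      _ = K * ((PN / PN') * (Pi' * Pj)) := by rw [hK]; field_simp
      _ = K * (((N:ℝ)+1) ^ σ * (Pi' * Pj)) := by
          rw [hσ, show a.re - c.re = (a.re - 1) - (c.re - 1) by ring,
            Real.rpow_sub (by positivity)]
  have step2 : ((N:ℝ)+1) ^ σ ≤ ((i:ℝ)+1) ^ |σ| * ((j:ℝ)+1) ^ σ := by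
    rw [hNc]; exact rpow_sum_bound σ i j
  have step3 : K * (((N:ℝ)+1) ^ σ * (Pi' * Pj)) * Complex.abs x ^ i
      ≤ K * ((((i:ℝ)+1) ^ |σ| * ((j:ℝ)+1) ^ σ) * (Pi' * Pj)) * Complex.abs x ^ i := by
    apply mul_le_mul_of_nonneg_right _ hxpow
    apply mul_le_mul_of_nonneg_left _ (by positivity)
    exact mul_le_mul_of_nonneg_right step2 (by positivity)
  have hfinal : K * ((((i:ℝ)+1) ^ |σ| * ((j:ℝ)+1) ^ σ) * (Pi' * Pj)) * Complex.abs x ^ i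
      = (K * (((i:ℝ)+1) ^ (|σ| + b₁.re - 1) * Complex.abs x ^ i))
        * ((j:ℝ)+1) ^ (σ + b₂.re - 1) := by
    rw [show |σ| + b₁.re - 1 = |σ| + (b₁.re - 1) by ring,
      show σ + b₂.re - 1 = σ + (b₂.re - 1) by ring,
      Real.rpow_add (by positivity), Real.rpow_add (by positivity)]
    ring
  calc Complex.abs (poch a N) * Complex.abs (poch b₁ i) * Complex.abs (poch b₂ j)
      / (Complex.abs (poch c N) * i.factorial * j.factorial) * Complex.abs x ^ i
      ≤ K * (((N:ℝ)+1) ^ σ * (Pi' * Pj)) * Complex.abs x ^ i :=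
        mul_le_mul_of_nonneg_right step1 hxpow
    _ ≤ K * ((((i:ℝ)+1) ^ |σ| * ((j:ℝ)+1) ^ σ) * (Pi' * Pj)) * Complex.abs x ^ i := step3
    _ = _ := hfinal

lemma appell_summable_aux (a b₁ b₂ c x : ℂ) (hre : 0 < (c - a - b₂).re)
    (hc : ∀ k : ℕ, c ≠ -k) (hx : Complex.abs x < 1) :
    Summable (appellF1Term a b₁ b₂ c x 1) := by
  obtain ⟨K, hK, hbd⟩ := appell_term_bound a b₁ b₂ c x hc
  have hf : Summable (fun i : ℕ =>
      K * (((i:ℝ)+1) ^ (|a.re - c.re| + b₁.re - 1) * Complex.abs x ^ i)) :=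
    (summable_rpow_geom (AbsoluteValue.nonneg _ _) hx).mul_left K
  have hg : Summable (fun j : ℕ => ((j:ℝ)+1) ^ (a.re - c.re + b₂.re - 1)) := by
    apply summable_rpow_shift
    simp only [Complex.sub_re] at hre
    linarith
  have hfg : Summable (fun p : ℕ × ℕ =>
      (K * (((p.1:ℝ)+1) ^ (|a.re - c.re| + b₁.re - 1) * Complex.abs x ^ p.1))
        * ((p.2:ℝ)+1) ^ (a.re - c.re + b₂.re - 1)) :=
    hf.mul_of_nonneg hg (fun i => by positivity) (fun j => by positivity)
  exact Summable.of_norm_bounded hfg (fun p => hbd p)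

lemma Gamma_add_nat {z : ℂ} (hz : ∀ k : ℕ, z ≠ -k) (n : ℕ) :
    Complex.Gamma (z + n) = poch z n * Complex.Gamma z := by
  induction n with
  | zero => simp [poch_zero]
  | succ n ih =>
    have hzn : z + n ≠ 0 := by
      intro h; exact hz n (by linear_combination h)
    have hcast : z + ((n+1:ℕ):ℂ) = (z + n) + 1 := by push_cast; ring
    rw [hcast, Complex.Gamma_add_one _ hzn, ih, poch_succ]
    ring

theorem appell_main (a b₁ b₂ c x : ℂ) (hre : 0 < (c - a - b₂).re)
    (hc : ∀ k : ℕ, c ≠ -(k : ℂ)) (hcb : ∀ k : ℕ, c - b₂ ≠ -(k : ℂ))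
    (hx : Complex.abs x < 1) :
    ∑' p : ℕ × ℕ, appellF1Term a b₁ b₂ c x 1 p =
      Complex.Gamma c * Complex.Gamma (c - a - b₂) /
        (Complex.Gamma (c - a) * Complex.Gamma (c - b₂))
        * ∑' k : ℕ, poch a k * poch b₁ k / (poch (c - b₂) k * (Nat.factorial k : ℂ)) * x ^ k := by
  set G : ℂ := Complex.Gamma c * Complex.Gamma (c - a - b₂) /
    (Complex.Gamma (c - a) * Complex.Gamma (c - b₂)) with hG
  have h_sum := appell_summable_aux a b₁ b₂ c x hre hc hx
  rw [Summable.tsum_prod' h_sum (fun i => h_sum.prod_factor i)]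
  have row : ∀ i : ℕ, ∑' j : ℕ, appellF1Term a b₁ b₂ c x 1 (i, j)
      = G * (poch a i * poch b₁ i / (poch (c - b₂) i * (Nat.factorial i : ℂ)) * x ^ i) := by
    intro i
    have hγi : ∀ k : ℕ, c + i ≠ -k := shift_ne hc i
    have hβi : ∀ k : ℕ, (c + i) - b₂ ≠ -k := by
      intro k h
      exact shift_ne hcb i k (by linear_combination h)
    have hrei : 0 < ((c+i) - (a+i) - b₂).re := by
      have : (c+i) - (a+i) - b₂ = c - a - b₂ := by ring
      rwa [this]
    have hpci : poch c i ≠ 0 := poch_ne_zero hc i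
    have hfaci : ((i.factorial : ℕ):ℂ) ≠ 0 := by exact_mod_cast i.factorial_ne_zero
    have step1 : ∀ j : ℕ, appellF1Term a b₁ b₂ c x 1 (i, j)
        = (poch a i * poch b₁ i / (poch c i * (Nat.factorial i : ℂ)) * x ^ i)
          * gaussTerm (a + i) b₂ (c + i) j := by
      intro j
      have hpcij : poch (c + i) j ≠ 0 := poch_ne_zero hγi j
      have hfacj : ((j.factorial : ℕ):ℂ) ≠ 0 := by exact_mod_cast j.factorial_ne_zero
      simp only [appellF1Term, gaussTerm, poch_add, one_pow, mul_one]
      field_simp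
    rw [tsum_congr step1, tsum_mul_left,
      gauss_sum (a + i) b₂ (c + i) hγi hβi hrei]
    have e1 : (c+i) - (a+i) - b₂ = c - a - b₂ := by ring
    have e2 : (c+i) - (a+i) = c - a := by ring
    have e3 : (c+i) - b₂ = (c - b₂) + i := by ring
    rw [e1, e2, e3, Gamma_add_nat hc i, Gamma_add_nat hcb i]
    have hpcbi : poch (c - b₂) i ≠ 0 := poch_ne_zero hcb i
    have hΓcb : Complex.Gamma (c - b₂) ≠ 0 := Complex.Gamma_ne_zero hcb
    by_cases hΓca : Complex.Gamma (c - a) = 0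
    · rw [hG, hΓca]
      simp
    · rw [hG]
      field_simp
  rw [tsum_congr row, tsum_mul_left]


theorem stmt_8 (a b₁ b₂ c x : ℂ) (hre : 0 < (c - a - b₂).re)
    (hc : ∀ k : ℕ, c ≠ -(k : ℂ)) (hcb : ∀ k : ℕ, c - b₂ ≠ -(k : ℂ))
    (hx : ‖x‖ < 1) :
    Summable (appellF1Term a b₁ b₂ c x 1) ∧
    appellF1 a b₁ b₂ c x 1 =
      Complex.Gamma c * Complex.Gamma (c - a - b₂) /
        (Complex.Gamma (c - a) * Complex.Gamma (c - b₂)) * hyp2F1 a b₁ (c - b₂) x :=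
  ⟨appell_summable_aux a b₁ b₂ c x hre hc hx,
    appell_main a b₁ b₂ c x hre hc hcb hx⟩
end
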